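/- arXiv:1802.09459 — 4 statements merged into one kernel-verified Lean document; each statement's English description precedes it below -/
import Mathlib

section
/- Let p be an odd prime and let G be a finite p-group with the Ω-extension property, i.e. there exists a p-central finite p-group H (meaning every element of order dividing p in H is central) with G ≅ H/Ω₁(H), where Ω₁(H) is the subgroup generated by the elements of order dividing p. Then G itself is p-central. -/
/-- `Omega1 G p` is the subgroup Ω₁(G) generated by the elements of order dividing `p`. -/
def Omega1 (G : Type*) [Group G] (p : ℕ) : Subgroup G :=
  Subgroup.closure {g : G | g ^ p = 1}

section Aux

open scoped commutatorElement

variable {H : Type*} [Group H]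

lemma aux_conj_pow (g x : H) (n : ℕ) : (g * x * g⁻¹) ^ n = g * x ^ n * g⁻¹ := by
  induction n with
  | zero => simp
  | succ n ih => rw [pow_succ, ih, pow_succ]; group

/-- In a group, if `c` is central and `b * a = a * b * c`, then
`b ^ n * a = a * b ^ n * c ^ n`. -/
lemma aux_semicentral_pow {a b c : H} (hc : ∀ g : H, Commute c g)
    (hba : b * a = a * b * c) (n : ℕ) : b ^ n * a = a * b ^ n * c ^ n := by
  induction n with
  | zero => simp
  | succ n ih =>
    calc b ^ (n + 1) * a = b * (b ^ n * a) := by rw [pow_succ']; group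
      _ = b * (a * b ^ n * c ^ n) := by rw [ih]
      _ = (b * a) * (b ^ n * c ^ n) := by group
      _ = (a * b * c) * (b ^ n * c ^ n) := by rw [hba]
      _ = a * (b * (c * b ^ n)) * c ^ n := by group
      _ = a * (b * (b ^ n * c)) * c ^ n := by rw [(hc (b ^ n)).eq]
      _ = a * b ^ (n + 1) * c ^ (n + 1) := by rw [pow_succ b, pow_succ c]; group

/-- Class-two style power identity: if `c` is central and `b * a = a * b * c` then
`(a * b) ^ n = a ^ n * b ^ n * c ^ (n.choose 2)`. -/
lemma aux_pow_mul {a b c : H} (hc : ∀ g : H, Commute c g)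
    (hba : b * a = a * b * c) (n : ℕ) :
    (a * b) ^ n = a ^ n * b ^ n * c ^ n.choose 2 := by
  induction n with
  | zero => simp
  | succ n ih =>
    have h2 : b ^ n * a = a * b ^ n * c ^ n := aux_semicentral_pow hc hba n
    have hch : (n + 1).choose 2 = n.choose 2 + n := by
      rw [Nat.choose_succ_succ]
      simp [Nat.choose_one_right, Nat.add_comm]
    rw [pow_succ (a * b), ih, hch, pow_add c]
    calc a ^ n * b ^ n * c ^ n.choose 2 * (a * b)
        = a ^ n * (b ^ n * (c ^ n.choose 2 * a) * b) := by group
      _ = a ^ n * (b ^ n * (a * c ^ n.choose 2) * b) := by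
          rw [((hc a).pow_left _).eq]
      _ = a ^ n * ((b ^ n * a) * c ^ n.choose 2 * b) := by group
      _ = a ^ n * ((a * b ^ n * c ^ n) * c ^ n.choose 2 * b) := by rw [h2]
      _ = a ^ n * a * b ^ n * ((c ^ n * c ^ n.choose 2) * b) := by group
      _ = a ^ n * a * b ^ n * (b * (c ^ n * c ^ n.choose 2)) := by
          rw [(((hc b).pow_left n).mul_left (((hc b).pow_left _))).eq]
      _ = a ^ (n + 1) * b ^ (n + 1) * (c ^ n.choose 2 * c ^ n) := by group

lemma aux_card_lt [Finite H] {M : Subgroup H} (h : M ≠ ⊤) :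
    Nat.card M < Nat.card H := by
  have h1 : (M : Set H) ⊂ Set.univ := by
    rw [Set.ssubset_univ_iff]
    simpa [Subgroup.coe_eq_univ] using h
  have := Set.ncard_lt_ncard h1 Set.finite_univ
  rw [Set.ncard_univ, ← Nat.card_coe_set_eq] at this; exact this

/-- Key lemma: in a finite `p`-central `p`-group (`p` odd), any element whose
`p²`-th power is trivial has all commutators of order dividing `p`. -/
lemma key_lemma {p : ℕ} (hp : p.Prime) (hodd : p ≠ 2) :
    ∀ (n : ℕ) (H : Type*) [Group H] [Finite H], IsPGroup p H →
      (∀ h : H, h ^ p = 1 → h ∈ Subgroup.center H) →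
      Nat.card H ≤ n → ∀ x y : H, x ^ (p * p) = 1 → ⁅x, y⁆ ^ p = 1 := by
  intro n
  induction n with
  | zero =>
    intro H _ _ _ _ hcard
    exact absurd hcard (by have : 0 < Nat.card H := Nat.card_pos; omega)
  | succ n ih =>
    intro H _ _ hH hcent hcard x y hx
    haveI : Fact p.Prime := ⟨hp⟩
    by_cases htop : Subgroup.zpowers x = ⊤
    · -- x generates H, so H is cyclic and the commutator is trivial
      have hy : y ∈ Subgroup.zpowers x := htop ▸ Subgroup.mem_top y
      obtain ⟨k, hk⟩ := hy
      have : Commute x y := hk ▸ (Commute.refl x).zpow_right k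
      rw [commutatorElement_eq_one_iff_commute.mpr this, one_pow]
    · -- x lies in a maximal (hence normal) subgroup U, so M := x^H is proper
      haveI : Finite (Subgroup H) :=
        Finite.of_injective _ (SetLike.coe_injective (A := Subgroup H))
      haveI : IsCoatomic (Subgroup H) :=
        isCoatomic_of_orderTop_gt_wellFounded wellFounded_gt
      rcases eq_top_or_exists_le_coatom (Subgroup.zpowers x) with h | ⟨U, hU, hxU⟩
      · exact absurd h htop
      haveI : Group.IsNilpotent H := hH.isNilpotent
      haveI hUnormal : U.Normal :=
        Subgroup.NormalizerCondition.normal_of_coatom U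
          normalizerCondition_of_isNilpotent hU
      set M : Subgroup H := Subgroup.normalClosure {x} with hMdef
      haveI hMnormal : M.Normal := Subgroup.normalClosure_normal
      have hxM : x ∈ M := Subgroup.subset_normalClosure rfl
      have hMU : M ≤ U :=
        Subgroup.normalClosure_le_normal (by
          rw [Set.singleton_subset_iff]; exact hxU (Subgroup.mem_zpowers x))
      have hMne : M ≠ ⊤ := fun h => hU.1 (top_le_iff.mp (h ▸ hMU))
      have hMcard : Nat.card M ≤ n := by
        have h1 := aux_card_lt hMne
        omega
      -- induction hypothesis inside M
      have hcentM : ∀ m : ↥M, m ^ p = 1 → m ∈ Subgroup.center ↥M := by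
        intro m hm
        rw [Subgroup.mem_center_iff]
        intro k
        have hm' : (m : H) ^ p = 1 := by
          rw [← Subgroup.coe_pow, hm, Subgroup.coe_one]
        have h2 := (Subgroup.mem_center_iff.mp (hcent _ hm')) (k : H)
        exact Subtype.ext (by push_cast; exact h2)
      have hIH : ∀ a b : H, a ∈ M → b ∈ M → a ^ (p * p) = 1 → ⁅a, b⁆ ^ p = 1 := by
        intro a b ha hb hap
        have h1 := ih (↥M) (hH.to_subgroup M) hcentM hMcard ⟨a, ha⟩ ⟨b, hb⟩
          (Subtype.ext (by push_cast; exact hap))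
        have h2 : ((⁅(⟨a, ha⟩ : ↥M), (⟨b, hb⟩ : ↥M)⁆ ^ p : ↥M) : H) = 1 := by
          rw [h1]; rfl
        rw [commutatorElement_def] at h2 ⊢
        push_cast at h2
        exact h2
      -- every pair of elements of M has commutator of order dividing p
      have hc2 : ∀ a ∈ M, ∀ b ∈ M, ⁅a, b⁆ ^ p = 1 := by
        intro a ha
        have ha' : a ∈ Subgroup.closure (Group.conjugatesOfSet {x}) := ha
        refine Subgroup.closure_induction ?_ ?_ ?_ ?_ ha'
        · -- generators: conjugates of x
          intro a hgen b hb
          obtain ⟨x', hx', hconj⟩ := Group.mem_conjugatesOfSet_iff.mp hgen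
          rcases hx' with rfl
          obtain ⟨g, rfl⟩ := isConj_iff.mp hconj
          have haM : g * x' * g⁻¹ ∈ M := hMnormal.conj_mem x' hxM g
          have hap : (g * x' * g⁻¹) ^ (p * p) = 1 := by
            rw [aux_conj_pow, hx]; group
          exact hIH _ b haM hb hap
        · intro b _; rw [commutatorElement_one_left, one_pow]
        · -- multiplication
          intro a1 a2 _ _ h1 h2 b hb
          have key1 : ⁅a1 * a2, b⁆ = (a1 * ⁅a2, b⁆ * a1⁻¹) * ⁅a1, b⁆ := by
            simp only [commutatorElement_def]; group
          have hu : (a1 * ⁅a2, b⁆ * a1⁻¹) ^ p = 1 := by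
            rw [aux_conj_pow, h2 b hb]; group
          have hv : ⁅a1, b⁆ ^ p = 1 := h1 b hb
          have hcomm : Commute (a1 * ⁅a2, b⁆ * a1⁻¹) ⁅a1, b⁆ :=
            (Subgroup.mem_center_iff.mp (hcent _ hu) _).symm
          rw [key1, hcomm.mul_pow, hu, hv, one_mul]
        · -- inverses
          intro a _ h1 b hb
          have key1 : ⁅a⁻¹, b⁆ = a⁻¹ * ⁅a, b⁆⁻¹ * a := by
            simp only [commutatorElement_def]; group
          have h2 : a⁻¹ * ⁅a, b⁆⁻¹ * a = a⁻¹ * ⁅a, b⁆⁻¹ * (a⁻¹)⁻¹ := by group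
          rw [key1, h2, aux_conj_pow, inv_pow, h1 b hb]; group
      -- now compute ⁅x, y⁆ ^ p
      have hxpc : x ^ p ∈ Subgroup.center H := hcent _ (by rw [← pow_mul]; exact hx)
      set w : H := y * x⁻¹ * y⁻¹ with hwdef
      have hwM : w ∈ M := by
        have : y * x⁻¹ * y⁻¹ = y * x⁻¹ * y⁻¹ := rfl
        have hxinv : x⁻¹ ∈ M := inv_mem hxM
        exact hMnormal.conj_mem x⁻¹ hxinv y
      set c : H := w⁻¹ * x⁻¹ * w * x with hcdef
      have hcM : c ∈ M := by
        apply mul_mem (mul_mem (mul_mem (inv_mem hwM) (inv_mem hxM)) hwM) hxM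
      have hcp : c ^ p = 1 := by
        have : c = ⁅w⁻¹, x⁻¹⁆ := by rw [hcdef, commutatorElement_def]; group
        rw [this]
        exact hc2 _ (inv_mem hwM) _ (inv_mem hxM)
      have hccentral : ∀ g : H, Commute c g := fun g =>
        Subgroup.mem_center_iff.mp (hcent c hcp) g |>.symm
      have hwx : w * x = x * w * c := by rw [hcdef]; group
      have hxyxw : ⁅x, y⁆ = x * w := by rw [commutatorElement_def, hwdef]; group
      -- p ∣ p.choose 2 since p is odd
      obtain ⟨k, hk⟩ : ∃ k, p - 1 = 2 * k := by
        obtain ⟨k, hk⟩ := hp.odd_of_ne_two hodd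
        exact ⟨k, by omega⟩
      have hch2 : p.choose 2 = p * k := by
        rw [Nat.choose_two_right, hk]
        rw [Nat.mul_div_assoc p ⟨k, by ring⟩]
        have h2 : 2 * k / 2 = k := by omega
        rw [h2]
      have hcchoose : c ^ p.choose 2 = 1 := by
        rw [hch2, pow_mul, hcp, one_pow]
      have hwp : w ^ p = x⁻¹ ^ p := by
        have h1 : w ^ p = y * x⁻¹ ^ p * y⁻¹ := by rw [hwdef, aux_conj_pow]
        have h2 : x⁻¹ ^ p ∈ Subgroup.center H := by
          rw [inv_pow]; exact Subgroup.inv_mem _ hxpc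
        rw [h1, Subgroup.mem_center_iff.mp h2 y]; group
      calc ⁅x, y⁆ ^ p = (x * w) ^ p := by rw [hxyxw]
        _ = x ^ p * w ^ p * c ^ p.choose 2 := aux_pow_mul hccentral hwx p
        _ = x ^ p * x⁻¹ ^ p := by rw [hwp, hcchoose, mul_one]
        _ = 1 := by rw [inv_pow]; group

end Aux

open scoped commutatorElement

/-- If an odd-prime `p`-group `G` has the Ω-extension property (G ≅ H/Ω₁(H) for some
p-central finite p-group H), then `G` is p-central. -/
theorem omega_extension_property_implies_pCentral
    {p : ℕ} (hp : p.Prime) (hodd : p ≠ 2)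
    {G : Type*} [Group G] [Fintype G] (hG : IsPGroup p G)
    {H : Type*} [Group H] [Fintype H] (hH : IsPGroup p H)
    (hHcentral : Omega1 H p ≤ Subgroup.center H)
    (N : Subgroup H) (hN : N = Omega1 H p) [N.Normal]
    (e : G ≃* H ⧸ N) :
    Omega1 G p ≤ Subgroup.center G := by
  have hcentH : ∀ h : H, h ^ p = 1 → h ∈ Subgroup.center H := fun h hh =>
    hHcentral (Subgroup.subset_closure hh)
  have keyH : ∀ x y : H, x ^ (p * p) = 1 → ⁅x, y⁆ ^ p = 1 :=
    key_lemma hp hodd (Nat.card H) H hH hcentH le_rfl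
  -- every element of N has p-th power 1
  have hNpow : ∀ h ∈ N, h ^ p = 1 := by
    rw [hN]
    intro h hh
    refine Subgroup.closure_induction ?_ ?_ ?_ ?_ hh
    · exact fun g hg => hg
    · exact one_pow p
    · intro a b _ _ ha hb
      have hcomm : Commute a b := (Subgroup.mem_center_iff.mp (hcentH a ha) b).symm
      rw [hcomm.mul_pow, ha, hb, one_mul]
    · intro a _ ha; rw [inv_pow, ha]; group
  -- the quotient H/N is p-central
  have hQ : ∀ q : H ⧸ N, q ^ p = 1 → q ∈ Subgroup.center (H ⧸ N) := by
    intro q hq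
    obtain ⟨xh, rfl⟩ := QuotientGroup.mk_surjective q
    rw [Subgroup.mem_center_iff]
    intro b
    obtain ⟨yh, rfl⟩ := QuotientGroup.mk_surjective b
    have hxpN : xh ^ p ∈ N := by
      rw [← QuotientGroup.eq_one_iff]
      rw [← hq]
      rfl
    have hx2 : xh ^ (p * p) = 1 := by
      rw [pow_mul]; exact hNpow _ hxpN
    have hxinv2 : (xh⁻¹) ^ (p * p) = 1 := by rw [inv_pow, hx2]; group
    have hcommN : xh⁻¹ * yh⁻¹ * xh * yh ∈ N := by
      have h1 : ⁅xh⁻¹, yh⁻¹⁆ ^ p = 1 := keyH xh⁻¹ yh⁻¹ hxinv2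
      have h2 : ⁅xh⁻¹, yh⁻¹⁆ = xh⁻¹ * yh⁻¹ * xh * yh := by
        rw [commutatorElement_def]; group
      rw [hN]
      exact Subgroup.subset_closure (by rw [← h2]; exact h1)
    show QuotientGroup.mk yh * QuotientGroup.mk xh
        = QuotientGroup.mk xh * QuotientGroup.mk yh
    have : (QuotientGroup.mk (yh * xh) : H ⧸ N) = QuotientGroup.mk (xh * yh) := by
      rw [QuotientGroup.eq]
      have : (yh * xh)⁻¹ * (xh * yh) = xh⁻¹ * yh⁻¹ * xh * yh := by group
      rw [this]; exact hcommN
    simpa [QuotientGroup.mk_mul] using this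
  -- transfer along e
  intro g hg
  have hmap : e g ∈ Subgroup.center (H ⧸ N) := by
    have h1 : (Omega1 G p).map e.toMonoidHom ≤ Subgroup.center (H ⧸ N) := by
      rw [Omega1, MonoidHom.map_closure]
      rw [Subgroup.closure_le]
      rintro q ⟨g0, hg0, rfl⟩
      exact hQ _ (by rw [← map_pow]; rw [Set.mem_setOf_eq] at hg0; rw [hg0, map_one])
    exact h1 ⟨g, hg, rfl⟩
  rw [Subgroup.mem_center_iff]
  intro a
  apply e.injective
  rw [map_mul, map_mul]
  exact Subgroup.mem_center_iff.mp hmap (e a)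
end

section
/- Let p be an odd prime, let c and k be positive integers with k - 1 ≥ log_p(c+1) (equivalently p^{k-1} ≥ c+1), and let G be a finitely generated nilpotent group of nilpotency class at most c. Set K = G^{p^k}, the subgroup generated by all p^k-th powers. Then for every normal subgroup N of G one has [N, K] ≤ N^p. In particular K is powerful, i.e. [K, K] ≤ K^p. -/
/-- `subPow N m` is the subgroup generated by the `m`-th powers of elements of `N`. -/
def subPow {G : Type*} [Group G] (N : Subgroup G) (m : ℕ) : Subgroup G :=
  Subgroup.closure {x : G | ∃ n ∈ N, n ^ m = x}

open scoped commutatorElement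

namespace PowerfulAux

variable {M : Type*} [Group M]

abbrev lowerCentralSeries (M : Type*) [Group M] (n : ℕ) : Subgroup M :=
  (⊤ : Subgroup M).lowerCentralSeries n

lemma lowerCentralSeries_antitone : Antitone (lowerCentralSeries M) :=
  Subgroup.lowerCentralSeries_antitone ⊤

lemma lowerCentralSeries_zero : lowerCentralSeries M 0 = ⊤ := rfl

instance lowerCentralSeries_normal (n : ℕ) : (lowerCentralSeries M n).Normal := inferInstance

/-- Shifted lower central series: `F M 0 = F M 1 = ⊤`, `F M i = γ_i(M)` (math indexing). -/
def F (M : Type*) [Group M] (i : ℕ) : Subgroup M := lowerCentralSeries M (i - 1)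

lemma F_antitone {i j : ℕ} (h : i ≤ j) : F M j ≤ F M i :=
  lowerCentralSeries_antitone (by omega)

/-- Three subgroups lemma, `≤ N` version. -/
lemma three_subgroups {A B C N : Subgroup M} [hN : N.Normal]
    (h1 : ⁅⁅B, C⁆, A⁆ ≤ N) (h2 : ⁅⁅C, A⁆, B⁆ ≤ N) : ⁅⁅A, B⁆, C⁆ ≤ N := by
  rw [Subgroup.commutator_le]
  intro g hg c hc
  induction hg using Subgroup.closure_induction with
  | mem x hx =>
    obtain ⟨a, ha, b, hb, rfl⟩ := hx
    have e1 : ⁅a⁻¹, ⁅b⁻¹, c⁆⁆⁻¹ ∈ N := by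
      rw [commutatorElement_inv]
      exact h1 (Subgroup.commutator_mem_commutator
        (Subgroup.commutator_mem_commutator (B.inv_mem hb) hc) (A.inv_mem ha))
    have e2 : ⁅b, ⁅c⁻¹, a⁻¹⁆⁆⁻¹ ∈ N := by
      rw [commutatorElement_inv]
      exact h2 (Subgroup.commutator_mem_commutator
        (Subgroup.commutator_mem_commutator (C.inv_mem hc) (A.inv_mem ha)) hb)
    have key : ⁅⁅a, b⁆, c⁆ =
        (a * c * ⁅b, ⁅c⁻¹, a⁻¹⁆⁆⁻¹ * c⁻¹ * b * ⁅a⁻¹, ⁅b⁻¹, c⁆⁆⁻¹ * b⁻¹ * a⁻¹)⁻¹ := by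
      simp only [commutatorElement_def]
      group
    have m : a * c * ⁅b, ⁅c⁻¹, a⁻¹⁆⁆⁻¹ * c⁻¹ * b * ⁅a⁻¹, ⁅b⁻¹, c⁆⁆⁻¹ * b⁻¹ * a⁻¹ =
        ((a * c) * ⁅b, ⁅c⁻¹, a⁻¹⁆⁆⁻¹ * (a * c)⁻¹) * ((a * b) * ⁅a⁻¹, ⁅b⁻¹, c⁆⁆⁻¹ * (a * b)⁻¹) := by
      group
    rw [key, m]
    exact N.inv_mem (N.mul_mem (hN.conj_mem _ e2 _) (hN.conj_mem _ e1 _))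
  | one => simpa using N.one_mem
  | mul x y hx hy ihx ihy =>
    have key : ⁅x * y, c⁆ = x * ⁅y, c⁆ * x⁻¹ * ⁅x, c⁆ := by
      simp only [commutatorElement_def]; group
    rw [key]
    exact N.mul_mem (hN.conj_mem _ ihy _) ihx
  | inv x hx ihx =>
    have key : ⁅x⁻¹, c⁆ = x⁻¹ * ⁅x, c⁆⁻¹ * (x⁻¹)⁻¹ := by
      simp only [commutatorElement_def]; group
    rw [key]
    exact hN.conj_mem _ (N.inv_mem ihx) _

/-- `⁅γ_{i+1}, γ_{j+1}⁆ ≤ γ_{i+j+2}` i.e. in Lean indexing. -/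
lemma lcs_comm : ∀ j i : ℕ, ⁅lowerCentralSeries M i, lowerCentralSeries M j⁆ ≤
    lowerCentralSeries M (i + j + 1) := by
  intro j
  induction j with
  | zero =>
    intro i
    exact le_of_eq rfl
  | succ j ih =>
    intro i
    -- ⁅L i, L (j+1)⁆ = ⁅L i, ⁅L j, ⊤⁆⁆ = ⁅⁅L j, ⊤⁆, L i⁆ (comm)
    rw [Subgroup.commutator_comm]
    -- goal: ⁅L (j+1), L i⁆ = ⁅⁅L j, ⊤⁆, L i⁆ ≤ L (i+j+2)
    have : (lowerCentralSeries M (j + 1)) = ⁅lowerCentralSeries M j, ⊤⁆ := rfl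
    rw [this]
    refine three_subgroups ?_ ?_
    · -- ⁅⁅⊤, L i⁆, L j⁆ ≤ L (i+j+2)
      rw [Subgroup.commutator_comm (⊤ : Subgroup M)]
      calc ⁅⁅lowerCentralSeries M i, ⊤⁆, lowerCentralSeries M j⁆
          = ⁅lowerCentralSeries M (i+1), lowerCentralSeries M j⁆ := rfl
        _ ≤ lowerCentralSeries M (i + 1 + j + 1) := ih (i+1)
        _ ≤ lowerCentralSeries M (i + (j+1) + 1) := le_of_eq (by ring_nf)
    · -- ⁅⁅L i, L j⁆, ⊤⁆ ≤ L (i+j+2)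
      calc ⁅⁅lowerCentralSeries M i, lowerCentralSeries M j⁆, ⊤⁆
          ≤ ⁅lowerCentralSeries M (i+j+1), (⊤ : Subgroup M)⁆ :=
            Subgroup.commutator_mono (ih i) le_rfl
        _ = lowerCentralSeries M (i + j + 2) := rfl
        _ ≤ lowerCentralSeries M (i + (j+1) + 1) := le_of_eq (by ring_nf)

lemma F_comm {a b : ℕ} : ⁅F M a, F M b⁆ ≤ F M (a + b) := by
  rcases Nat.eq_zero_or_pos a with rfl | ha
  · rw [Subgroup.commutator_comm]
    calc ⁅F M b, F M 0⁆ = ⁅lowerCentralSeries M (b-1), ⊤⁆ := rfl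
      _ = lowerCentralSeries M (b-1+1) := rfl
      _ ≤ F M (0 + b) := lowerCentralSeries_antitone (by omega)
  rcases Nat.eq_zero_or_pos b with rfl | hb
  · calc ⁅F M a, F M 0⁆ = ⁅lowerCentralSeries M (a-1), ⊤⁆ := rfl
      _ = lowerCentralSeries M (a-1+1) := rfl
      _ ≤ F M (a + 0) := lowerCentralSeries_antitone (by omega)
  · calc ⁅F M a, F M b⁆ ≤ lowerCentralSeries M ((a-1) + (b-1) + 1) := lcs_comm _ _
      _ ≤ F M (a + b) := lowerCentralSeries_antitone (by omega)


/-- Difference operator. -/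
def dd (f : ℕ → M) : ℕ → M := fun n => (f n)⁻¹ * f (n + 1)

lemma dd_iter_succ (f : ℕ → M) (i : ℕ) : dd^[i+1] f = dd^[i] (dd f) :=
  Function.iterate_succ_apply dd i f

/-- `f` is polynomial of "level `a`" up to `s` differences. -/
def sLvl (s a : ℕ) (f : ℕ → M) : Prop := ∀ i, i ≤ s → ∀ n, dd^[i] f n ∈ F M (a + i)

lemma sLvl_mono_a {s a b : ℕ} {f : ℕ → M} (hf : sLvl s a f) (h : b ≤ a) : sLvl s b f :=
  fun i hi n => F_antitone (by omega) (hf i hi n)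

lemma sLvl_mono_s {s s' a : ℕ} {f : ℕ → M} (hf : sLvl s a f) (h : s' ≤ s) : sLvl s' a f :=
  fun i hi n => hf i (le_trans hi h) n

lemma sLvl_dd {s a : ℕ} {f : ℕ → M} (hf : sLvl (s+1) a f) : sLvl s (a+1) (dd f) := by
  intro i hi n
  have := hf (i+1) (by omega) n
  rw [dd_iter_succ] at this
  rw [show a + 1 + i = a + (i+1) by omega]
  exact this

lemma dd_shift (f : ℕ → M) : dd (fun n => f (n+1)) = fun n => dd f (n+1) := rfl

lemma dd_iter_shift (f : ℕ → M) (i : ℕ) :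
    dd^[i] (fun n => f (n+1)) = fun n => dd^[i] f (n+1) := by
  induction i generalizing f with
  | zero => rfl
  | succ i ih =>
    rw [dd_iter_succ, dd_shift, ih, dd_iter_succ]

lemma sLvl_shift {s a : ℕ} {f : ℕ → M} (hf : sLvl s a f) : sLvl s a (fun n => f (n+1)) := by
  intro i hi n
  rw [dd_iter_shift]
  exact hf i hi (n+1)

lemma dd_iter_one (i : ℕ) : dd^[i] (fun _ => (1 : M)) = fun _ => 1 := by
  induction i with
  | zero => rfl
  | succ i ih =>
    rw [dd_iter_succ, show dd (fun _ => (1:M)) = fun _ => (1:M) by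
      funext n; simp [dd]]
    exact ih

lemma sLvl_const {s a : ℕ} {m : M} (hm : m ∈ F M a) : sLvl s a (fun _ => m) := by
  intro i hi n
  cases i with
  | zero => exact F_antitone (by omega) hm
  | succ i =>
    rw [dd_iter_succ, show dd (fun _ => m) = fun _ => (1:M) by funext n; simp [dd],
      dd_iter_one]
    exact Subgroup.one_mem _

/-- The main (Leibman-style) closure theorem, by induction on the number of differences. -/
theorem theta : ∀ s : ℕ,
    (∀ (a : ℕ) (f : ℕ → M), sLvl s a f → sLvl s a (fun n => (f n)⁻¹)) ∧
    (∀ (a b : ℕ) (f g : ℕ → M), sLvl s a f → sLvl s b g →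
      sLvl s (min a b) (fun n => f n * g n)) ∧
    (∀ (a b : ℕ) (f g : ℕ → M), sLvl s a f → sLvl s b g →
      sLvl s (a + b) (fun n => ⁅f n, g n⁆)) := by
  intro s
  induction s with
  | zero =>
    refine ⟨?_, ?_, ?_⟩
    · intro a f hf i hi n
      interval_cases i
      exact (F M (a+0)).inv_mem (hf 0 le_rfl n)
    · intro a b f g hf hg i hi n
      interval_cases i
      exact (F M _).mul_mem (F_antitone (by omega) (hf 0 le_rfl n))
        (F_antitone (by omega) (hg 0 le_rfl n))
    · intro a b f g hf hg i hi n
      interval_cases i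
      have h1 : f n ∈ F M a := hf 0 le_rfl n
      have h2 : g n ∈ F M b := hg 0 le_rfl n
      exact F_antitone (by omega) (F_comm (Subgroup.commutator_mem_commutator h1 h2))
  | succ s ih =>
    obtain ⟨ihInv, ihMul, ihComm⟩ := ih
    have Winv : ∀ (a : ℕ) (f : ℕ → M), sLvl (s+1) a f → sLvl (s+1) a (fun n => (f n)⁻¹) := by
      intro a f hf i hi n
      cases i with
      | zero => exact F_antitone (by omega) ((F M a).inv_mem (hf 0 (by omega) n))
      | succ i =>
        rw [dd_iter_succ]
        have hexp : dd (fun n => (f n)⁻¹) =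
            fun n => (dd f n)⁻¹ * ⁅dd f n, f n⁆ := by
          funext n
          simp only [dd, commutatorElement_def]
          group
        rw [hexp]
        -- the RHS is a product of maps of s-level ≥ a+1
        have h1 : sLvl s (a+1) (fun n => (dd f n)⁻¹) :=
          ihInv (a+1) _ (sLvl_dd hf)
        have h2 : sLvl s ((a+1) + a) (fun n => ⁅dd f n, f n⁆) :=
          ihComm (a+1) a _ _ (sLvl_dd hf) (sLvl_mono_s hf (by omega))
        have h3 : sLvl s (a+1) (fun n => (dd f n)⁻¹ * ⁅dd f n, f n⁆) := by
          have := ihMul (a+1) ((a+1)+a) _ _ h1 h2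
          exact sLvl_mono_a this (by omega)
        have := h3 i (by omega) n
        rw [show a + 1 + i = a + (i+1) by omega] at this
        exact this
    refine ⟨Winv, ?_, ?_⟩
    · -- multiplication
      intro a b f g hf hg i hi n
      cases i with
      | zero =>
        exact (F M _).mul_mem (F_antitone (by omega) (hf 0 (by omega) n))
          (F_antitone (by omega) (hg 0 (by omega) n))
      | succ i =>
        rw [dd_iter_succ]
        have hexp : dd (fun n => f n * g n) =
            fun n => dd f n * ⁅(dd f n)⁻¹, (g n)⁻¹⁆ * dd g n := by
          funext n
          simp only [dd, commutatorElement_def]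
          group
        rw [hexp]
        have h1 : sLvl s (a+1) (dd f) := sLvl_dd hf
        have h2 : sLvl s ((a+1) + b) (fun n => ⁅(dd f n)⁻¹, (g n)⁻¹⁆) :=
          ihComm (a+1) b _ _ (ihInv (a+1) _ (sLvl_dd hf))
            (ihInv b _ (sLvl_mono_s hg (by omega)))
        have h3 : sLvl s (b+1) (dd g) := sLvl_dd hg
        have hprod : sLvl s (min a b + 1)
            (fun n => dd f n * ⁅(dd f n)⁻¹, (g n)⁻¹⁆ * dd g n) := by
          have hA := ihMul (a+1) ((a+1)+b) _ _ h1 h2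
          have hB := ihMul (min (a+1) ((a+1)+b)) (b+1) _ _ hA h3
          exact sLvl_mono_a hB (by omega)
        have := hprod i (by omega) n
        rw [show min a b + 1 + i = min a b + (i+1) by omega] at this
        exact this
    · -- commutator
      intro a b f g hf hg i hi n
      cases i with
      | zero =>
        have h1 : f n ∈ F M a := hf 0 (by omega) n
        have h2 : g n ∈ F M b := hg 0 (by omega) n
        exact F_antitone (by omega) (F_comm (Subgroup.commutator_mem_commutator h1 h2))
      | succ i =>
        rw [dd_iter_succ]
        have hexp : dd (fun n => ⁅f n, g n⁆) = fun n =>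
            ⁅(⁅f n, g n⁆)⁻¹, ⁅dd f n, g n⁆ * ⁅(⁅dd f n, g n⁆)⁻¹, f n⁆⁆ *
            (⁅dd f n, g n⁆ * ⁅(⁅dd f n, g n⁆)⁻¹, f n⁆) *
            (⁅f (n+1), dd g n⁆ * ⁅(⁅f (n+1), dd g n⁆)⁻¹, g n⁆) := by
          funext n
          simp only [dd, commutatorElement_def]
          group
        rw [hexp]
        -- levels
        have hf_s : sLvl s a f := sLvl_mono_s hf (by omega)
        have hg_s : sLvl s b g := sLvl_mono_s hg (by omega)
        have hH : sLvl s (a + b) (fun n => ⁅f n, g n⁆) := ihComm a b f g hf_s hg_s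
        have hHinv : sLvl s (a + b) (fun n => (⁅f n, g n⁆)⁻¹) := ihInv _ _ hH
        have hX1 : sLvl s (a + 1 + b) (fun n => ⁅dd f n, g n⁆) :=
          ihComm (a+1) b _ _ (sLvl_dd hf) hg_s
        have hT1 : sLvl s (a + b + 1)
            (fun n => ⁅dd f n, g n⁆ * ⁅(⁅dd f n, g n⁆)⁻¹, f n⁆) := by
          have hc : sLvl s ((a+1+b) + a) (fun n => ⁅(⁅dd f n, g n⁆)⁻¹, f n⁆) :=
            ihComm _ a _ _ (ihInv _ _ hX1) hf_s
          have := ihMul (a+1+b) ((a+1+b)+a) _ _ hX1 hc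
          exact sLvl_mono_a this (by omega)
        have hX2 : sLvl s (a + (b+1)) (fun n => ⁅f (n+1), dd g n⁆) :=
          ihComm a (b+1) _ _ (sLvl_shift hf_s) (sLvl_dd hg)
        have hT2 : sLvl s (a + b + 1)
            (fun n => ⁅f (n+1), dd g n⁆ * ⁅(⁅f (n+1), dd g n⁆)⁻¹, g n⁆) := by
          have hc : sLvl s ((a+(b+1)) + b) (fun n => ⁅(⁅f (n+1), dd g n⁆)⁻¹, g n⁆) :=
            ihComm _ b _ _ (ihInv _ _ hX2) hg_s
          have := ihMul (a+(b+1)) ((a+(b+1))+b) _ _ hX2 hc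
          exact sLvl_mono_a this (by omega)
        have hC0 : sLvl s ((a+b) + (a+b+1))
            (fun n => ⁅(⁅f n, g n⁆)⁻¹, ⁅dd f n, g n⁆ * ⁅(⁅dd f n, g n⁆)⁻¹, f n⁆⁆) :=
          ihComm (a+b) (a+b+1) _ _ hHinv hT1
        have hprod : sLvl s (a + b + 1) (fun n =>
            ⁅(⁅f n, g n⁆)⁻¹, ⁅dd f n, g n⁆ * ⁅(⁅dd f n, g n⁆)⁻¹, f n⁆⁆ *
            (⁅dd f n, g n⁆ * ⁅(⁅dd f n, g n⁆)⁻¹, f n⁆) *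
            (⁅f (n+1), dd g n⁆ * ⁅(⁅f (n+1), dd g n⁆)⁻¹, g n⁆)) := by
          have hA := ihMul ((a+b)+(a+b+1)) (a+b+1) _ _ hC0 hT1
          have hB := ihMul (min ((a+b)+(a+b+1)) (a+b+1)) (a+b+1) _ _ hA hT2
          exact sLvl_mono_a hB (by omega)
        have := hprod i (by omega) n
        rw [show a + b + 1 + i = a + b + (i+1) by omega] at this
        exact this


/- atoms -/
lemma dd_atom (w : M) (i : ℕ) :
    dd (fun n => w ^ n.choose (i+1)) = fun n => w ^ n.choose i := by
  funext n
  simp only [dd]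
  rw [Nat.choose_succ_succ', Nat.add_comm (n.choose i), pow_add, inv_mul_cancel_left]

lemma atom_lvl : ∀ (j a i : ℕ) (w : M), w ∈ F M (a + i) →
    ∀ n, dd^[j] (fun n => w ^ n.choose i) n ∈ F M (a + j) := by
  intro j
  induction j with
  | zero =>
    intro a i w hw n
    exact F_antitone (by omega) ((F M (a+i)).pow_mem hw _)
  | succ j ih =>
    intro a i w hw n
    rw [dd_iter_succ]
    cases i with
    | zero =>
      rw [show dd (fun n => w ^ n.choose 0) = fun _ => (1:M) by
        funext n; simp [dd], dd_iter_one]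
      exact Subgroup.one_mem _
    | succ i =>
      rw [dd_atom]
      have := ih (a+1) i w (by
        rw [show a + 1 + i = a + (i+1) by omega]; exact hw) n
      rw [show a + 1 + j = a + (j+1) by omega] at this
      exact this

lemma sLvl_atom {s a i : ℕ} {w : M} (hw : w ∈ F M (a + i)) :
    sLvl s a (fun n => w ^ n.choose i) :=
  fun j _ n => atom_lvl j a i w hw n

/- Newton expansion for commuting-valued maps -/

lemma dd_iter_mem (Z : Subgroup M) (f : ℕ → M) (hf : ∀ n, f n ∈ Z) :
    ∀ i n, dd^[i] f n ∈ Z := by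
  intro i
  induction i generalizing f hf with
  | zero => exact hf
  | succ i ih =>
    intro n
    rw [dd_iter_succ]
    exact ih (dd f) (fun m => Z.mul_mem (Z.inv_mem (hf m)) (hf (m+1))) n

lemma step_eq (f : ℕ → M) (n : ℕ) : f (n+1) = f n * dd f n := by
  simp [dd]

section Newton

variable {A : Type*} [CommGroup A]

lemma telescope (f : ℕ → A) (n : ℕ) : f n = f 0 * ∏ j ∈ Finset.range n, dd f j := by
  induction n with
  | zero => simp
  | succ n ih =>
    rw [Finset.prod_range_succ, ← mul_assoc, ← ih, ← step_eq]

lemma hockey (i : ℕ) : ∀ n, (∑ j ∈ Finset.range n, j.choose i) = n.choose (i+1) := by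
  intro n
  induction n with
  | zero => simp
  | succ n ih =>
    rw [Finset.sum_range_succ, ih, Nat.choose_succ_succ']
    exact Nat.add_comm _ _

lemma newton : ∀ (d : ℕ) (f : ℕ → A), (∀ n, dd^[d+1] f n = 1) →
    ∀ n, f n = ∏ i ∈ Finset.range (d+1), (dd^[i] f 0) ^ n.choose i := by
  intro d
  induction d with
  | zero =>
    intro f h n
    have hconst : ∀ m, f m = f 0 := by
      intro m
      induction m with
      | zero => rfl
      | succ m ihm =>
        rw [step_eq f m, ihm]
        have : dd f m = 1 := h m
        rw [this, mul_one]
    simp [hconst n]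
  | succ d ih =>
    intro f h n
    have hg : ∀ m, dd^[d+1] (dd f) m = 1 := by
      intro m
      rw [← dd_iter_succ]
      exact h m
    have ihg := ih (dd f) hg
    calc f n = f 0 * ∏ j ∈ Finset.range n, dd f j := telescope f n
      _ = f 0 * ∏ j ∈ Finset.range n, ∏ i ∈ Finset.range (d+1),
            (dd^[i] (dd f) 0) ^ j.choose i := by
          rw [Finset.prod_congr rfl (fun j _ => ihg j)]
      _ = f 0 * ∏ i ∈ Finset.range (d+1), ∏ j ∈ Finset.range n,
            (dd^[i] (dd f) 0) ^ j.choose i := by rw [Finset.prod_comm]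
      _ = f 0 * ∏ i ∈ Finset.range (d+1), (dd^[i] (dd f) 0) ^ n.choose (i+1) := by
          congr 1
          refine Finset.prod_congr rfl (fun i _ => ?_)
          rw [Finset.prod_pow_eq_pow_sum, hockey]
      _ = ∏ i ∈ Finset.range (d+2), (dd^[i] f 0) ^ n.choose i := by
          symm
          rw [Finset.prod_range_succ', mul_comm]
          simp only [Function.iterate_zero, id_eq, Nat.choose_zero_right, pow_one]
          congr 1
end Newton

/-- Newton expansion inside a commuting subgroup of `M`, with ordered list product. -/
lemma newton_in_group (Z : Subgroup M) (hZ : ∀ x ∈ Z, ∀ y ∈ Z, x * y = y * x)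
    (f : ℕ → M) (hf : ∀ n, f n ∈ Z) (d : ℕ) (h : ∀ n, dd^[d+1] f n = 1) (n : ℕ) :
    f n = ((List.range (d+1)).map (fun i => (dd^[i] f 0) ^ n.choose i)).prod := by
  letI : CommGroup ↥Z :=
    { (inferInstance : Group ↥Z) with
      mul_comm := fun x y => Subtype.ext (hZ x x.2 y y.2) }
  set f' : ℕ → ↥Z := fun m => ⟨f m, hf m⟩ with hf'
  have hcoe : ∀ (i : ℕ) (g : ℕ → ↥Z) (m : ℕ),
      ((dd^[i] g m : ↥Z) : M) = dd^[i] (fun n => ((g n : M))) m := by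
    intro i
    induction i with
    | zero => intro g m; rfl
    | succ i ih =>
      intro g m
      rw [dd_iter_succ, dd_iter_succ]
      have hco : (fun n => ((dd g n : ↥Z) : M)) = dd (fun n => ((g n : M))) := rfl
      rw [ih (dd g) m, hco]
  have h' : ∀ m, dd^[d+1] f' m = 1 := by
    intro m
    apply Subtype.ext
    rw [hcoe]
    exact h m
  have hn := newton d f' h' n
  have key : ∀ (m : ℕ) (g : ℕ → ↥Z),
      ((∏ i ∈ Finset.range m, g i : ↥Z) : M) = ((List.range m).map (fun i => (g i : M))).prod := by
    intro m g
    induction m with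
    | zero => simp
    | succ m ihm =>
      rw [Finset.prod_range_succ, List.range_succ, List.map_append, List.prod_append]
      push_cast [ihm]
      simp
  have := congrArg (Subtype.val) hn
  rw [key] at this
  simp only [SubmonoidClass.coe_pow, hcoe] at this
  exact this


/-- Level of an ordered product of binomial atoms. -/
lemma sLvl_aprod {s : ℕ} (z : ℕ → M) (hz : ∀ i, z i ∈ F M i) :
    ∀ m : ℕ, sLvl s 0 (fun n => ((List.range m).map (fun i => z i ^ n.choose i)).prod) := by
  intro m
  induction m with
  | zero =>
    simpa using (sLvl_const (Subgroup.one_mem _) : sLvl s 0 (fun _ => (1:M)))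
  | succ m ih =>
    have hatom : sLvl s 0 (fun n => z m ^ n.choose m) :=
      sLvl_atom (by simpa using hz m)
    have := (theta s).2.1 0 0 _ _ ih hatom
    have heq : (fun n : ℕ => ((List.range m).map (fun i => z i ^ n.choose i)).prod *
        z m ^ n.choose m) =
        (fun n : ℕ => ((List.range (m+1)).map (fun i => z i ^ n.choose i)).prod) := by
      funext n
      rw [List.range_succ, List.map_append, List.prod_append, List.map_singleton,
        List.prod_singleton]
    rw [heq] at this
    simpa using this

lemma prod_mul_central (z w : ℕ → M) (e : ℕ → ℕ) (hw : ∀ (i : ℕ) (g : M), w i * g = g * w i) :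
    ∀ l : List ℕ, (l.map (fun i => (z i * w i) ^ e i)).prod =
      (l.map (fun i => z i ^ e i)).prod * (l.map (fun i => w i ^ e i)).prod := by
  intro l
  induction l with
  | nil => simp
  | cons a t ih =>
    have hcomm : Commute (z a) (w a) := (hw a (z a)).symm
    have h1 : Commute ((w a) ^ e a) ((t.map (fun i => z i ^ e i)).prod) :=
      Commute.pow_left (hw a ((t.map (fun i => z i ^ e i)).prod)) _
    simp only [List.map_cons, List.prod_cons, ih]
    rw [hcomm.mul_pow]
    calc z a ^ e a * w a ^ e a *
          ((t.map (fun i => z i ^ e i)).prod * (t.map (fun i => w i ^ e i)).prod)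
        = z a ^ e a * ((w a ^ e a * (t.map (fun i => z i ^ e i)).prod) *
            (t.map (fun i => w i ^ e i)).prod) := by group
      _ = z a ^ e a * (((t.map (fun i => z i ^ e i)).prod * w a ^ e a) *
            (t.map (fun i => w i ^ e i)).prod) := by rw [h1.eq]
      _ = z a ^ e a * (t.map (fun i => z i ^ e i)).prod *
            (w a ^ e a * (t.map (fun i => w i ^ e i)).prod) := by group

/-- Surjective image bounds the lower central series from above. -/
lemma lcs_le_map_of_surjective {N : Type*} [Group N] (f : M →* N)
    (hf : Function.Surjective f) :
    ∀ n, lowerCentralSeries N n ≤ (lowerCentralSeries M n).map f := by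
  intro n
  induction n with
  | zero =>
    rw [lowerCentralSeries_zero, lowerCentralSeries_zero,
      Subgroup.map_top_of_surjective f hf]
  | succ n ih =>
    calc lowerCentralSeries N (n+1) = ⁅lowerCentralSeries N n, ⊤⁆ := rfl
      _ ≤ ⁅(lowerCentralSeries M n).map f, (⊤ : Subgroup M).map f⁆ :=
          Subgroup.commutator_mono ih (by rw [Subgroup.map_top_of_surjective f hf])
      _ = Subgroup.map f ⁅lowerCentralSeries M n, ⊤⁆ := (Subgroup.map_commutator _ _ f).symm
      _ = (lowerCentralSeries M (n+1)).map f := rfl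

/-- Hall–Petrescu-type expansion relative to a normal subgroup `P` containing `x`. -/
theorem HP : ∀ (c : ℕ) (M : Type*) [Group M], lowerCentralSeries M c = ⊥ →
    ∀ (P : Subgroup M), P.Normal → ∀ x ∈ P, ∀ y : M, ∃ z : ℕ → M,
      z 0 = 1 ∧ z 1 = 1 ∧ (∀ i, z i ∈ F M i ⊓ P) ∧
      ∀ n : ℕ, (x * y) ^ n = x ^ n * y ^ n *
        ((List.range (c+1)).map (fun i => z i ^ n.choose i)).prod := by
  intro c
  induction c with
  | zero =>
    intro M _ hnil P hP x hx y
    have htriv : ∀ m : M, m = 1 := by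
      intro m
      have : m ∈ lowerCentralSeries M 0 := Subgroup.mem_top m
      rw [hnil] at this
      exact Subgroup.mem_bot.1 this
    refine ⟨fun _ => 1, rfl, rfl, fun i => ⟨Subgroup.one_mem _, Subgroup.one_mem _⟩, ?_⟩
    intro n
    rw [htriv ((x*y)^n), htriv (x ^ n * y ^ n *
      ((List.range (0+1)).map (fun i => (1:M) ^ n.choose i)).prod)]
  | succ c ih =>
    intro M _ hnil P hP x hx y
    set Z : Subgroup M := lowerCentralSeries M c with hZdef
    haveI hZnormal : Z.Normal := lowerCentralSeries_normal c
    have hZcentral : ∀ z ∈ Z, ∀ m : M, z * m = m * z := by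
      intro z hz m
      have h1 : ⁅z, m⁆ ∈ ⁅Z, (⊤ : Subgroup M)⁆ :=
        Subgroup.commutator_mem_commutator hz (Subgroup.mem_top m)
      have h2 : ⁅Z, (⊤ : Subgroup M)⁆ = ⊥ := hnil
      rw [h2, Subgroup.mem_bot] at h1
      exact commutatorElement_eq_one_iff_mul_comm.1 h1
    set π : M →* M ⧸ Z := QuotientGroup.mk' Z with hπdef
    have hπsurj : Function.Surjective π := QuotientGroup.mk'_surjective Z
    have hkerπ : π.ker = Z := QuotientGroup.ker_mk' Z
    have hnilQ : lowerCentralSeries (M ⧸ Z) c = ⊥ := by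
      have h1 := lcs_le_map_of_surjective π hπsurj c
      have h2 : Subgroup.map π (lowerCentralSeries M c) = ⊥ := by
        rw [Subgroup.map_eq_bot_iff, hkerπ]
      exact le_bot_iff.mp (le_trans h1 (le_of_eq h2))
    -- apply the inductive hypothesis in the quotient
    haveI hPQ : (P.map π).Normal := hP.map π hπsurj
    obtain ⟨zb, hzb0, hzb1, hzbmem, hzbeq⟩ :=
      ih (M ⧸ Z) hnilQ (P.map π) hPQ (π x) (Subgroup.mem_map_of_mem π hx) (π y)
    classical
    -- lift the coefficients
    have hlift : ∀ i, 2 ≤ i → i ≤ c → ∃ v : M, (v ∈ F M i ⊓ P) ∧ π v = zb i := by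
      intro i _ hi
      have h1 : zb i ∈ F (M ⧸ Z) i := (hzbmem i).1
      have h2 : zb i ∈ P.map π := (hzbmem i).2
      have h3 : F (M ⧸ Z) i ≤ Subgroup.map π (F M i) :=
        lcs_le_map_of_surjective π hπsurj (i-1)
      obtain ⟨u, hu, huq⟩ := h3 h1
      obtain ⟨v, hv, hvq⟩ := h2
      refine ⟨v, ⟨?_, hv⟩, hvq⟩
      have hzmem : u⁻¹ * v ∈ Z := by
        rw [← hkerπ]
        have : π (u⁻¹ * v) = 1 := by
          rw [map_mul, map_inv, huq, hvq, inv_mul_cancel]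
        exact this
      have hZle : Z ≤ F M i := by
        rw [hZdef]
        exact lowerCentralSeries_antitone (by omega)
      have hveq : v = u * (u⁻¹ * v) := by group
      rw [hveq]
      exact (F M i).mul_mem hu (hZle hzmem)
    set z : ℕ → M := fun i =>
      if h1 : i ≤ 1 then 1 else if h : i ≤ c then
        Classical.choose (hlift i (by omega) h) else 1 with hzdef
    have hzmem : ∀ i, z i ∈ F M i ⊓ P := by
      intro i
      simp only [hzdef]
      by_cases h1 : i ≤ 1
      · rw [dif_pos h1]
        exact ⟨Subgroup.one_mem _, Subgroup.one_mem _⟩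
      · rw [dif_neg h1]
        by_cases h2 : i ≤ c
        · rw [dif_pos h2]
          exact (Classical.choose_spec (hlift i (by omega) h2)).1
        · rw [dif_neg h2]
          exact ⟨Subgroup.one_mem _, Subgroup.one_mem _⟩
    have hz0 : z 0 = 1 := by simp only [hzdef]; simp
    have hz1 : z 1 = 1 := by simp only [hzdef]; simp
    have hzhigh : z (c+1) = 1 := by
      simp only [hzdef]
      by_cases h1 : c + 1 ≤ 1
      · rw [dif_pos h1]
      · rw [dif_neg h1, dif_neg (by omega)]
    have hπz : ∀ i, i ≤ c → π (z i) = zb i := by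
      intro i hi
      simp only [hzdef]
      by_cases h1 : i ≤ 1
      · rw [dif_pos h1, map_one]
        interval_cases i
        · exact hzb0.symm
        · exact hzb1.symm
      · rw [dif_neg h1, dif_pos hi]
        exact (Classical.choose_spec (hlift i (by omega) hi)).2
    set Zprod : ℕ → M :=
      fun n => ((List.range (c+1)).map (fun i => z i ^ n.choose i)).prod with hZproddef
    set ε : ℕ → M := fun n => (x ^ n * y ^ n * Zprod n)⁻¹ * (x * y) ^ n with hεdef
    have hπZprod : ∀ n, π (Zprod n) =
        ((List.range (c+1)).map (fun i => zb i ^ n.choose i)).prod := by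
      intro n
      simp only [hZproddef]
      rw [map_list_prod, List.map_map]
      congr 1
      refine List.map_congr_left (fun i hi => ?_)
      have : i ≤ c := by
        have := List.mem_range.mp hi
        omega
      simp only [Function.comp_apply, map_pow, hπz i this]
    have hεZ : ∀ n, ε n ∈ Z := by
      intro n
      rw [← hkerπ]
      have : π (ε n) = 1 := by
        simp only [hεdef]
        simp only [map_mul, map_inv, map_pow, hπZprod]
        rw [inv_mul_eq_one]
        exact (hzbeq n).symm
      exact this
    haveI : P.Normal := hP
    have hεP : ∀ n, ε n ∈ P := by
      intro n
      have h1 : ∀ n, (QuotientGroup.mk' P) (ε n) = 1 := by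
        intro n
        simp only [hεdef]
        have hxP : (QuotientGroup.mk' P) x = 1 := (QuotientGroup.eq_one_iff x).mpr hx
        have hzP : ∀ i, (QuotientGroup.mk' P) (z i) = 1 :=
          fun i => (QuotientGroup.eq_one_iff _).mpr (hzmem i).2
        have hZprodP : (QuotientGroup.mk' P) (Zprod n) = 1 := by
          rw [hZproddef, map_list_prod, List.map_map]
          apply List.prod_eq_one
          intro a ha
          obtain ⟨i, _, rfl⟩ := List.mem_map.mp ha
          simp only [Function.comp_apply, map_pow, hzP i, one_pow]
        simp [map_mul, map_inv, map_pow, hZprodP, hxP]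
      have := h1 n
      rw [QuotientGroup.mk'_apply] at this
      rwa [QuotientGroup.eq_one_iff] at this
    -- ε is polynomial of level 0
    have hatom_pow : ∀ g : M, sLvl (c+2) 0 (fun n => g ^ n) := by
      intro g
      have h1 : sLvl (c+2) 0 (fun n => g ^ n.choose 1) :=
        sLvl_atom (show g ∈ F M (0+1) from Subgroup.mem_top g)
      have : (fun n : ℕ => g ^ n.choose 1) = fun n : ℕ => g ^ n := by
        funext n; rw [Nat.choose_one_right]
      rwa [this] at h1
    have hZprodLvl : sLvl (c+2) 0 Zprod :=
      sLvl_aprod z (fun i => (hzmem i).1) (c+1)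
    have hεLvl : sLvl (c+2) 0 ε := by
      have h1 := (theta (c+2)).2.1 0 0 _ _ (hatom_pow x) (hatom_pow y)
      have h2 := (theta (c+2)).2.1 0 0 _ _ h1 hZprodLvl
      have h3 := (theta (c+2)).1 0 _ h2
      have h4 := (theta (c+2)).2.1 0 0 _ _ h3 (hatom_pow (x * y))
      exact h4
    have hvanish : ∀ n, dd^[c+2] ε n = 1 := by
      intro n
      have h1 := hεLvl (c+2) le_rfl n
      rw [show (0 : ℕ) + (c+2) = c+2 by omega] at h1
      have h2 : F M (c+2) = ⊥ := hnil
      rw [h2, Subgroup.mem_bot] at h1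
      exact h1
    have hZcomm' : ∀ a ∈ Z, ∀ b ∈ Z, a * b = b * a :=
      fun a ha b _ => hZcentral a ha b
    have hNewton := fun n => newton_in_group Z hZcomm' ε hεZ (c+1) hvanish n
    set w : ℕ → M := fun i => dd^[i] ε 0 with hwdef
    have hwZ : ∀ i, w i ∈ Z := fun i => dd_iter_mem Z ε hεZ i 0
    have hwP : ∀ i, w i ∈ P := fun i => dd_iter_mem P ε hεP i 0
    have hwcentral : ∀ (i : ℕ) (g : M), w i * g = g * w i :=
      fun i g => hZcentral _ (hwZ i) g
    have hZprod0 : Zprod 0 = 1 := by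
      simp only [hZproddef]
      apply List.prod_eq_one
      intro a ha
      obtain ⟨i, _, rfl⟩ := List.mem_map.mp ha
      cases i with
      | zero => simp [hz0]
      | succ i => simp [Nat.choose_zero_succ]
    have hZprod1 : Zprod 1 = 1 := by
      simp only [hZproddef]
      apply List.prod_eq_one
      intro a ha
      obtain ⟨i, _, rfl⟩ := List.mem_map.mp ha
      match i with
      | 0 => simp [hz0]
      | 1 => simp [hz1]
      | (i+2) => rw [Nat.choose_eq_zero_of_lt (by omega), pow_zero]
    have hε0 : ε 0 = 1 := by
      simp only [hεdef]
      simp [hZprod0]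
    have hε1 : ε 1 = 1 := by
      simp only [hεdef]
      simp only [hZprod1, pow_one, mul_one]
      group
    have hw0 : w 0 = 1 := hε0
    have hw1 : w 1 = 1 := by
      simp only [hwdef]
      show dd ε 0 = 1
      rw [dd]
      rw [hε0, hε1]
      simp
    -- assemble the new coefficient function
    refine ⟨fun i => if i ≤ c + 1 then z i * w i else 1, ?_, ?_, ?_, ?_⟩
    · simp [hz0, hw0]
    · simp [hz1, hw1]
    · intro i
      by_cases h : i ≤ c + 1
      · simp only [h, if_true]
        have hZleF : Z ≤ F M i := by
          rw [hZdef]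
          exact lowerCentralSeries_antitone (by omega)
        exact ⟨(F M i).mul_mem (hzmem i).1 (hZleF (hwZ i)),
          P.mul_mem (hzmem i).2 (hwP i)⟩
      · simp only [h, if_false]
        exact ⟨Subgroup.one_mem _, Subgroup.one_mem _⟩
    · intro n
      have key1 : (x * y) ^ n = x ^ n * y ^ n * Zprod n * ε n := by
        show (x * y) ^ n = x ^ n * y ^ n * Zprod n *
          ((x ^ n * y ^ n * Zprod n)⁻¹ * (x * y) ^ n)
        rw [mul_inv_cancel_left]
      have key2 : ((List.range (c+1+1)).map
          (fun i => (if i ≤ c + 1 then z i * w i else 1) ^ n.choose i)).prod =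
          ((List.range (c+2)).map (fun i => (z i * w i) ^ n.choose i)).prod := by
        congr 1
        refine List.map_congr_left (fun i hi => ?_)
        have : i ≤ c + 1 := by
          have := List.mem_range.mp hi
          omega
        rw [if_pos this]
      have key3 : ((List.range (c+2)).map (fun i => (z i * w i) ^ n.choose i)).prod =
          ((List.range (c+2)).map (fun i => z i ^ n.choose i)).prod *
          ((List.range (c+2)).map (fun i => w i ^ n.choose i)).prod :=
        prod_mul_central z w _ hwcentral _
      have key4 : ((List.range (c+2)).map (fun i => z i ^ n.choose i)).prod = Zprod n := by
        rw [show c + 2 = (c+1) + 1 by omega, List.range_succ, List.map_append,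
          List.prod_append, hZproddef]
        simp [hzhigh]
      have key5 : ((List.range (c+2)).map (fun i => w i ^ n.choose i)).prod = ε n :=
        (hNewton n).symm
      rw [key2, key3, key4, key5, ← mul_assoc, key1]

/-- conjugation and powers -/
lemma conj_pow_nat (a b : M) (n : ℕ) : (a * b * a⁻¹) ^ n = a * b ^ n * a⁻¹ := by
  induction n with
  | zero => simp
  | succ n ih => rw [pow_succ, pow_succ, ih]; group

/-- The core lemma: `(x*y)^(p^k) = y^(p^k)` for `x` in a normal exponent-`p` subgroup
of a nilpotent group of class at most `c`, provided `c + 1 ≤ p^(k-1)`. -/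
lemma core {p c k : ℕ} (hp : p.Prime) (hk : 0 < k) (hck : c + 1 ≤ p ^ (k-1))
    {Q : Type*} [Group Q] (hnil : lowerCentralSeries Q c = ⊥)
    (P : Subgroup Q) (hP : P.Normal) (hPp : ∀ a ∈ P, a ^ p = 1)
    (x : Q) (hx : x ∈ P) (y : Q) : (x * y) ^ (p ^ k) = y ^ (p ^ k) := by
  obtain ⟨z, hz0, hz1, hzmem, hzeq⟩ := HP c Q hnil P hP x hx y
  have hpk : p ^ k = p * p ^ (k - 1) := by
    conv_lhs => rw [show k = (k-1)+1 by omega]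
    rw [pow_succ']
  have hxpow : x ^ (p ^ k) = 1 := by
    rw [hpk, pow_mul, hPp x hx, one_pow]
  have hprod : ((List.range (c+1)).map (fun i => z i ^ (p^k).choose i)).prod = 1 := by
    apply List.prod_eq_one
    intro a ha
    obtain ⟨i, hi, rfl⟩ := List.mem_map.mp ha
    have hi' : i < c + 1 := List.mem_range.mp hi
    match i, hi' with
    | 0, _ => simp [hz0]
    | 1, _ => simp [hz1]
    | (j+2), hj =>
      have hle : p ^ (k-1) ≤ p ^ k := Nat.pow_le_pow_right hp.one_lt.le (by omega)
      have hne : (j+2) ≠ p ^ k := by omega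
      obtain ⟨t, ht⟩ := hp.dvd_choose_pow (by omega) hne
      rw [ht, pow_mul, hPp (z (j+2)) (hzmem (j+2)).2, one_pow]
  rw [hzeq (p^k), hxpow, one_mul, hprod, mul_one]


lemma normal_subPow {G : Type*} [Group G] {N : Subgroup G} (hN : N.Normal) (m : ℕ) :
    (subPow N m).Normal := by
  constructor
  intro a ha g
  induction ha using Subgroup.closure_induction with
  | mem x hxm =>
    obtain ⟨n, hn, rfl⟩ := hxm
    have : g * n ^ m * g⁻¹ = (g * n * g⁻¹) ^ m := (conj_pow_nat g n m).symm
    rw [this]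
    exact Subgroup.subset_closure ⟨g * n * g⁻¹, hN.conj_mem n hn g, rfl⟩
  | one => simpa using Subgroup.one_mem _
  | mul u v _ _ ihu ihv =>
    have : g * (u * v) * g⁻¹ = (g * u * g⁻¹) * (g * v * g⁻¹) := by group
    rw [this]
    exact Subgroup.mul_mem _ ihu ihv
  | inv u _ ihu =>
    have : g * u⁻¹ * g⁻¹ = (g * u * g⁻¹)⁻¹ := by group
    rw [this]
    exact Subgroup.inv_mem _ ihu

/-- The main reduction: for every normal `N`, `⁅N, K⁆ ≤ subPow N p`. -/
lemma main_step {p c k : ℕ} (hp : p.Prime) (hk : 0 < k) (hck : c + 1 ≤ p ^ (k - 1))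
    {G : Type*} [Group G] (hnil : lowerCentralSeries G c = ⊥)
    (K : Subgroup G) (hK : K = subPow (⊤ : Subgroup G) (p ^ k))
    (N : Subgroup G) (hN : N.Normal) : ⁅N, K⁆ ≤ subPow N p := by
  haveI hM₀ : (subPow N p).Normal := normal_subPow hN p
  set π : G →* G ⧸ (subPow N p) := QuotientGroup.mk' (subPow N p) with hπdef
  have hπsurj : Function.Surjective π := QuotientGroup.mk'_surjective _
  have hnilQ : lowerCentralSeries (G ⧸ (subPow N p)) c = ⊥ := by
    have h1 := lcs_le_map_of_surjective π hπsurj c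
    rw [hnil, Subgroup.map_bot] at h1
    exact le_bot_iff.mp h1
  haveI hP' : (N.map π).Normal := hN.map π hπsurj
  have hPp' : ∀ a ∈ N.map π, a ^ p = 1 := by
    intro a ha
    obtain ⟨n, hn, rfl⟩ := ha
    rw [← map_pow, hπdef, QuotientGroup.mk'_apply, QuotientGroup.eq_one_iff]
    exact Subgroup.subset_closure ⟨n, hn, rfl⟩
  -- every `p^k`-th power in the quotient centralizes `N.map π`
  have hcomm : ∀ (g : G ⧸ (subPow N p)), ∀ m ∈ N.map π,
      m * g ^ (p ^ k) = g ^ (p ^ k) * m := by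
    intro g m hm
    have h2 : m * (g * m⁻¹ * g⁻¹) ∈ N.map π :=
      Subgroup.mul_mem _ hm (hP'.conj_mem _ (Subgroup.inv_mem _ hm) g)
    have h3 : m * g ^ (p ^ k) * m⁻¹ = ((m * (g * m⁻¹ * g⁻¹)) * g) ^ (p ^ k) := by
      rw [show (m * (g * m⁻¹ * g⁻¹)) * g = m * g * m⁻¹ by group, conj_pow_nat]
    have h4 : m * g ^ (p ^ k) * m⁻¹ = g ^ (p ^ k) := by
      rw [h3]
      exact core hp hk hck hnilQ (N.map π) hP' hPp' _ h2 g
    calc m * g ^ (p ^ k) = (m * g ^ (p ^ k) * m⁻¹) * m := by group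
      _ = g ^ (p ^ k) * m := by rw [h4]
  have hcent : Subgroup.map π K ≤ Subgroup.centralizer (N.map π) := by
    rw [hK]
    show Subgroup.map π (Subgroup.closure _) ≤ _
    rw [MonoidHom.map_closure]
    rw [Subgroup.closure_le]
    rintro a ⟨u0, ⟨u, -, rfl⟩, rfl⟩
    show _ ∈ Subgroup.centralizer _
    rw [Subgroup.mem_centralizer_iff]
    intro m hm
    rw [map_pow]
    exact hcomm (π u) m hm
  have hbot : Subgroup.map π ⁅N, K⁆ = ⊥ := by
    rw [Subgroup.map_commutator]
    rw [Subgroup.commutator_comm, Subgroup.commutator_eq_bot_iff_le_centralizer]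
    exact hcent
  have := (Subgroup.map_eq_bot_iff _).mp hbot
  rwa [hπdef, QuotientGroup.ker_mk'] at this

end PowerfulAux

/-- Let `p` be odd, `p^{k-1} ≥ c+1`, and `G` a finitely generated nilpotent group of class at
most `c`. With `K = G^{p^k}`, for every normal subgroup `N` of `G` we have `[N,K] ≤ N^p`;
in particular `K` is powerful: `[K,K] ≤ K^p`. -/
theorem commutator_with_pk_powers_le_pPowers_odd
    {p : ℕ} (hp : p.Prime) (hodd : p ≠ 2) (c k : ℕ) (hc : 0 < c) (hk : 0 < k)
    (hck : c + 1 ≤ p ^ (k - 1))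
    {G : Type*} [Group G] (hfg : Group.FG G)
    (hnil : (⊤ : Subgroup G).lowerCentralSeries c = ⊥)
    (K : Subgroup G) (hK : K = subPow (⊤ : Subgroup G) (p ^ k)) :
    (∀ N : Subgroup G, N.Normal → ⁅N, K⁆ ≤ subPow N p) ∧ ⁅K, K⁆ ≤ subPow K p := by
  have main := fun N hN => PowerfulAux.main_step hp hk hck hnil K hK N hN
  refine ⟨main, ?_⟩
  have hKnormal : K.Normal := by
    rw [hK]
    exact PowerfulAux.normal_subPow inferInstance _
  exact main K hKnormal
end

section
/- Let p be an odd prime and let G be a finite p-group of nilpotency class at most c. If k is a positive integer with p^{k-1} ≥ c+1, and C = ⟨y⟩ is a cyclic subgroup with C ≤ γ_c(G) (so C is central in G), then the subgroup G^{p^k}·C is powerful. -/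
namespace PkAux

variable {G : Type*} [Group G]

open scoped commutatorElement

lemma pow_mem_subPow {N : Subgroup G} {x : G} (hx : x ∈ N) (m : ℕ) : x ^ m ∈ subPow N m :=
  Subgroup.subset_closure ⟨x, hx, rfl⟩

lemma conj_pow' (a b : G) (n : ℕ) : (a * b * a⁻¹) ^ n = a * b ^ n * a⁻¹ := by
  induction n with
  | zero => simp
  | succ n ih => rw [pow_succ, ih, pow_succ]; group

lemma map_subPow {H : Type*} [Group H] (f : G →* H) (N : Subgroup G) (m : ℕ) :
    (subPow N m).map f = subPow (N.map f) m := by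
  unfold subPow
  rw [MonoidHom.map_closure]
  congr 1
  ext x
  constructor
  · rintro ⟨-, ⟨n, hn, rfl⟩, rfl⟩
    exact ⟨f n, ⟨n, hn, rfl⟩, (map_pow f n m).symm⟩
  · rintro ⟨n', hn', rfl⟩
    obtain ⟨n, hn, rfl⟩ := Subgroup.mem_map.mp hn'
    exact ⟨n ^ m, ⟨n, hn, rfl⟩, map_pow f n m⟩

lemma closure_normal_of_conj (S : Set G)
    (hS : ∀ g s : G, s ∈ S → g * s * g⁻¹ ∈ Subgroup.closure S) :
    (Subgroup.closure S).Normal := by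
  constructor
  intro x hx g
  induction hx using Subgroup.closure_induction with
  | mem s hs => exact hS g s hs
  | one => simpa using Subgroup.one_mem _
  | mul u v _ _ hu' hv' =>
      have h : g * (u * v) * g⁻¹ = (g * u * g⁻¹) * (g * v * g⁻¹) := by group
      rw [h]; exact mul_mem hu' hv'
  | inv u _ hu' =>
      have h : g * u⁻¹ * g⁻¹ = (g * u * g⁻¹)⁻¹ := by group
      rw [h]; exact inv_mem hu'

lemma lcs_succ' (n : ℕ) : (⊤ : Subgroup G).lowerCentralSeries (n + 1) = ⁅(⊤ : Subgroup G).lowerCentralSeries n, ⊤⁆ := rfl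

lemma lcs_map {H : Type*} [Group H] {f : G →* H} (hf : Function.Surjective f) :
    ∀ n, ((⊤ : Subgroup G).lowerCentralSeries n).map f = (⊤ : Subgroup H).lowerCentralSeries n := by
  intro n
  induction n with
  | zero =>
      rw [Subgroup.lowerCentralSeries_zero, Subgroup.lowerCentralSeries_zero]
      exact Subgroup.map_top_of_surjective f hf
  | succ n ih =>
      rw [lcs_succ', lcs_succ', Subgroup.map_commutator, ih,
        Subgroup.map_top_of_surjective f hf]

lemma commK_mem {K : Subgroup G} {u v : G} (hu : u ∈ K) (hv : v ∈ K) : ⁅u, v⁆ ∈ K := by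
  rw [commutatorElement_def]
  exact mul_mem (mul_mem (mul_mem hu hv) (inv_mem hu)) (inv_mem hv)

lemma central_comm_left {z x : G} (hz : z ∈ Subgroup.center G) : ⁅z, x⁆ = 1 := by
  rw [commutatorElement_eq_one_iff_commute]
  exact ((Subgroup.mem_center_iff.mp hz) x).symm

lemma central_comm_right {z x : G} (hz : z ∈ Subgroup.center G) : ⁅x, z⁆ = 1 := by
  rw [commutatorElement_eq_one_iff_commute]
  exact (Subgroup.mem_center_iff.mp hz) x

lemma conj_central {z g : G} (hz : z ∈ Subgroup.center G) : g * z * g⁻¹ = z := by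
  rw [Subgroup.mem_center_iff] at hz
  rw [hz g, mul_assoc, mul_inv_cancel, mul_one]

lemma comm_mul_left_central {u v w : G} (h : ⁅v, w⁆ ∈ Subgroup.center G) :
    ⁅u * v, w⁆ = ⁅v, w⁆ * ⁅u, w⁆ := by
  have h1 : ⁅u * v, w⁆ = u * ⁅v, w⁆ * u⁻¹ * ⁅u, w⁆ := by
    simp only [commutatorElement_def]; group
  rw [h1, conj_central h]

lemma comm_mul_right_central {u v w : G} (h : ⁅u, w⁆ ∈ Subgroup.center G) :
    ⁅u, v * w⁆ = ⁅u, v⁆ * (v * ⁅u, w⁆ * v⁻¹) := by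
  simp only [commutatorElement_def]; group

lemma comm_mul_right_central' {u v w : G} (h : ⁅u, w⁆ ∈ Subgroup.center G) :
    ⁅u, v * w⁆ = ⁅u, v⁆ * ⁅u, w⁆ := by
  rw [comm_mul_right_central h, conj_central h]


lemma core_comm {p c q h : ℕ} {K : Subgroup G}
    (hnorm : ∀ g x : G, x ∈ K → g * x * g⁻¹ ∈ K)
    (hcent : ∀ u v : G, u ∈ K → v ∈ K → ⁅u, v⁆ ∈ Subgroup.center G)
    (hexp : ∀ u ∈ K, u ^ p = 1)
    (h2 : 2 * h = p + 1)
    (hnil : (⊤ : Subgroup G).lowerCentralSeries c = ⊥)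
    (hq1 : c + 1 ≤ q)
    (hqp : ∀ i, 0 < i → i < q → p ∣ q.choose i)
    (a v : G) (hv : v ∈ K) : a ^ q * v = v * a ^ q := by
  classical
  -- abbreviation for centrality of powers of commutators
  have hcentpow : ∀ {u w : G}, u ∈ K → w ∈ K → ∀ n : ℕ, ⁅u, w⁆ ^ n ∈ Subgroup.center G :=
    fun hu hw n => pow_mem (hcent _ _ hu hw) n
  have hpp1 : ∀ {x : G}, x ∈ K → x ^ (p + 1) = x := by
    intro x hx
    rw [pow_succ, hexp x hx, one_mul]
  -- the Baer addition
  have memadd : ∀ u w : ↥K, (u : G) * w * ⁅(w : G), (u : G)⁆ ^ h ∈ K := fun u w =>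
    mul_mem (mul_mem u.2 w.2) (pow_mem (commK_mem w.2 u.2) h)
  -- commutativity key
  have keyC : ∀ u w : G, u ∈ K → w ∈ K →
      u * w * ⁅w, u⁆ ^ h = w * u * ⁅u, w⁆ ^ h := by
    intro u w hu hw
    have he : ⁅u, w⁆ ∈ Subgroup.center G := hcent _ _ hu hw
    have hsplit : u * w = ⁅u, w⁆ * (w * u) := by
      simp only [commutatorElement_def]; group
    have hiv : ⁅w, u⁆ = ⁅u, w⁆⁻¹ := (commutatorElement_inv u w).symm ▸ rfl
    rw [Subgroup.mem_center_iff] at he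
    have heq : ⁅u, w⁆ * (⁅u, w⁆ ^ h)⁻¹ = ⁅u, w⁆ ^ h := by
      rw [mul_inv_eq_iff_eq_mul, ← pow_add]
      have hh : h + h = p + 1 := by omega
      rw [hh, hpp1 (commK_mem hu hw)]
    rw [hsplit, hiv, inv_pow]
    calc ⁅u, w⁆ * (w * u) * (⁅u, w⁆ ^ h)⁻¹
        = w * u * ⁅u, w⁆ * (⁅u, w⁆ ^ h)⁻¹ := by rw [← he (w * u)]
      _ = w * u * (⁅u, w⁆ * (⁅u, w⁆ ^ h)⁻¹) := by simp only [mul_assoc]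
      _ = w * u * ⁅u, w⁆ ^ h := by rw [heq]
  -- associativity key
  have keyA : ∀ u w x : G, u ∈ K → w ∈ K → x ∈ K →
      (u * w * ⁅w, u⁆ ^ h) * x * ⁅x, u * w * ⁅w, u⁆ ^ h⁆ ^ h
        = u * (w * x * ⁅x, w⁆ ^ h) * ⁅w * x * ⁅x, w⁆ ^ h, u⁆ ^ h := by
    intro u w x hu hw hx
    have he1 : ⁅w, u⁆ ∈ Subgroup.center G := hcent _ _ hw hu
    have he2 : ⁅x, u⁆ ∈ Subgroup.center G := hcent _ _ hx hu
    have he3 : ⁅x, w⁆ ∈ Subgroup.center G := hcent _ _ hx hw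
    have hE1 : ⁅w, u⁆ ^ h ∈ Subgroup.center G := hcentpow hw hu h
    have hE3 : ⁅x, w⁆ ^ h ∈ Subgroup.center G := hcentpow hx hw h
    have hA : ⁅x, u * w * ⁅w, u⁆ ^ h⁆ = ⁅x, u⁆ * ⁅x, w⁆ := by
      rw [comm_mul_right_central' (by rw [central_comm_right hE1]; exact Subgroup.one_mem _),
        central_comm_right hE1, mul_one, comm_mul_right_central' he3]
    have hB : ⁅w * x * ⁅x, w⁆ ^ h, u⁆ = ⁅x, u⁆ * ⁅w, u⁆ := by
      rw [comm_mul_left_central (by rw [central_comm_left hE3]; exact Subgroup.one_mem _),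
        central_comm_left hE3, one_mul, comm_mul_left_central he2]
    rw [hA, hB]
    -- products of powers of central elements
    have hmul2 : (⁅x, u⁆ * ⁅x, w⁆) ^ h = ⁅x, u⁆ ^ h * ⁅x, w⁆ ^ h :=
      (Commute.mul_pow (Subgroup.mem_center_iff.mp he3 _) h)
    have hmul3 : (⁅x, u⁆ * ⁅w, u⁆) ^ h = ⁅x, u⁆ ^ h * ⁅w, u⁆ ^ h :=
      (Commute.mul_pow (Subgroup.mem_center_iff.mp he1 _) h)
    rw [hmul2, hmul3]
    have hE2 : ⁅x, u⁆ ^ h ∈ Subgroup.center G := hcentpow hx hu h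
    -- now a pure shuffle of central elements
    rw [Subgroup.mem_center_iff] at hE1 hE2 hE3
    calc u * w * ⁅w, u⁆ ^ h * x * (⁅x, u⁆ ^ h * ⁅x, w⁆ ^ h)
        = u * w * (⁅w, u⁆ ^ h * x) * (⁅x, u⁆ ^ h * ⁅x, w⁆ ^ h) := by
          simp only [mul_assoc]
      _ = u * w * (x * ⁅w, u⁆ ^ h) * (⁅x, u⁆ ^ h * ⁅x, w⁆ ^ h) := by
          rw [← hE1 x]
      _ = u * (w * x) * (⁅w, u⁆ ^ h * ⁅x, u⁆ ^ h * ⁅x, w⁆ ^ h) := by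
          simp only [mul_assoc]
      _ = u * (w * x) * (⁅x, w⁆ ^ h * (⁅x, u⁆ ^ h * ⁅w, u⁆ ^ h)) := by
          congr 1
          rw [← hE1 (⁅x, u⁆ ^ h)]
          exact hE3 _
      _ = u * (w * x * ⁅x, w⁆ ^ h) * (⁅x, u⁆ ^ h * ⁅w, u⁆ ^ h) := by
          simp only [mul_assoc]

  -- Baer's additive structure on K
  letI hadd : Add ↥K := ⟨fun u w => ⟨(u : G) * w * ⁅(w : G), (u : G)⁆ ^ h, memadd u w⟩⟩
  letI hzero : Zero ↥K := ⟨⟨1, K.one_mem⟩⟩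
  letI hneg : Neg ↥K := ⟨fun u => ⟨(u : G)⁻¹, inv_mem u.2⟩⟩
  letI acg : AddCommGroup ↥K :=
  { add := (· + ·)
    zero := 0
    neg := Neg.neg
    nsmul := nsmulRec
    nsmul_zero := fun _ => rfl
    nsmul_succ := fun _ _ => rfl
    zsmul := zsmulRec
    zsmul_zero' := fun _ => rfl
    zsmul_succ' := fun _ _ => rfl
    zsmul_neg' := fun _ _ => rfl
    add_assoc := fun u w x => Subtype.ext (keyA u w x u.2 w.2 x.2)
    zero_add := by
      intro u
      apply Subtype.ext
      show (1 : G) * u * ⁅(u : G), (1 : G)⁆ ^ h = (u : G)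
      have h1 : ⁅(u : G), (1 : G)⁆ = 1 := by simp [commutatorElement_def]
      rw [h1, one_pow, mul_one, one_mul]
    add_zero := by
      intro u
      apply Subtype.ext
      show (u : G) * 1 * ⁅(1 : G), (u : G)⁆ ^ h = (u : G)
      have h1 : ⁅(1 : G), (u : G)⁆ = 1 := by simp [commutatorElement_def]
      rw [h1, one_pow, mul_one, mul_one]
    neg_add_cancel := by
      intro u
      apply Subtype.ext
      show (u : G)⁻¹ * u * ⁅(u : G), (u : G)⁻¹⁆ ^ h = 1
      have h1 : ⁅(u : G), (u : G)⁻¹⁆ = 1 := by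
        rw [commutatorElement_eq_one_iff_commute]
        exact Commute.inv_right (Commute.refl _)
      rw [h1, one_pow, mul_one, inv_mul_cancel]
    add_comm := fun u w => Subtype.ext (keyC u w u.2 w.2) }
  have val_add : ∀ x y : ↥K, ((x + y : ↥K) : G) = (x : G) * y * ⁅(y : G), (x : G)⁆ ^ h :=
    fun _ _ => rfl
  have val_zero : ((0 : ↥K) : G) = 1 := rfl
  have val_neg : ∀ x : ↥K, ((-x : ↥K) : G) = (x : G)⁻¹ := fun _ => rfl
  -- the conjugation endomorphism
  have hfadd : ∀ x y : ↥K,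
      (⟨a * ((x + y : ↥K) : G) * a⁻¹, hnorm a _ (x + y).2⟩ : ↥K)
        = (⟨a * x * a⁻¹, hnorm a _ x.2⟩ : ↥K) + ⟨a * y * a⁻¹, hnorm a _ y.2⟩ := by
    intro x y
    apply Subtype.ext
    show a * ((x : G) * y * ⁅(y : G), (x : G)⁆ ^ h) * a⁻¹
      = (a * x * a⁻¹) * (a * y * a⁻¹) * ⁅a * (y : G) * a⁻¹, a * (x : G) * a⁻¹⁆ ^ h
    have hcen : ⁅(y : G), (x : G)⁆ ∈ Subgroup.center G := hcent _ _ y.2 x.2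
    have hconj : ⁅a * (y : G) * a⁻¹, a * (x : G) * a⁻¹⁆ = a * ⁅(y : G), (x : G)⁆ * a⁻¹ := by
      simp only [commutatorElement_def]; group
    rw [hconj, conj_central hcen]
    have hsplit : a * ((x : G) * y * ⁅(y : G), (x : G)⁆ ^ h) * a⁻¹
        = (a * x * a⁻¹) * (a * y * a⁻¹) * (a * ⁅(y : G), (x : G)⁆ ^ h * a⁻¹) := by group
    rw [hsplit, conj_central (pow_mem hcen h)]
  let σ0 : ↥K →+ ↥K := AddMonoidHom.mk' (fun x => ⟨a * x * a⁻¹, hnorm a _ x.2⟩) hfadd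
  let σ : Module.End ℤ ↥K := σ0.toIntLinearMap
  let τ : Module.End ℤ ↥K := σ - 1
  have sigma_val : ∀ x : ↥K, ((σ x : ↥K) : G) = a * x * a⁻¹ := fun _ => rfl
  have tau_apply : ∀ x : ↥K, τ x = σ x - x := by
    intro x
    show (σ - 1) x = σ x - x
    rw [LinearMap.sub_apply, Module.End.one_apply]
  have tau_central : ∀ x : ↥K, (x : G) ∈ Subgroup.center G → τ x = 0 := by
    intro x hx
    rw [tau_apply]
    have hs : σ x = x := Subtype.ext (by rw [sigma_val]; exact conj_central hx)
    rw [hs, sub_self]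
  have tau_val : ∀ (z : G) (hz : z ∈ K),
      ((τ ⟨z, hz⟩ : ↥K) : G) = ⁅a, z⁆ * ⁅z⁻¹, a * z * a⁻¹⁆ ^ h := by
    intro z hz
    rw [tau_apply, sub_eq_add_neg, val_add, val_neg, sigma_val]
    have hcd : ⁅a, z⁆ = a * z * a⁻¹ * z⁻¹ := commutatorElement_def a z
    rw [hcd]
  have nsmul_val : ∀ (n : ℕ) (x : ↥K), ((n • x : ↥K) : G) = (x : G) ^ n := by
    intro n x
    induction n with
    | zero => rw [zero_nsmul, pow_zero]; exact val_zero
    | succ n ih =>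
        rw [succ_nsmul, val_add, ih]
        have hcomm : ⁅(x : G), (x : G) ^ n⁆ = 1 :=
          commutatorElement_eq_one_iff_commute.mpr ((Commute.refl _).pow_right n)
        rw [hcomm, one_pow, mul_one, ← pow_succ]
  have psmul_zero : ∀ x : ↥K, p • x = 0 := by
    intro x
    apply Subtype.ext
    rw [nsmul_val, val_zero]
    exact hexp _ x.2
  have cast_zero : ∀ m : ℕ, p ∣ m → (m : Module.End ℤ ↥K) = 0 := by
    intro m hm
    obtain ⟨d, rfl⟩ := hm
    apply LinearMap.ext
    intro x
    rw [Module.End.natCast_apply, LinearMap.zero_apply, mul_comm, mul_nsmul, psmul_zero]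
  have hdecomp : ∀ i : ℕ, ∀ x : ↥K, ∃ z w : G, z ∈ (⊤ : Subgroup G).lowerCentralSeries i ∧ z ∈ K ∧
      w ∈ Subgroup.center G ∧ w ∈ K ∧ (((τ ^ i) x : ↥K) : G) = z * w := by
    intro i
    induction i with
    | zero =>
        intro x
        refine ⟨x, 1, ?_, x.2, Subgroup.one_mem _, K.one_mem, ?_⟩
        · rw [Subgroup.lowerCentralSeries_zero]; exact Subgroup.mem_top _
        · rw [pow_zero, Module.End.one_apply, mul_one]
    | succ i ih =>
        intro x
        obtain ⟨z, w, hz, hzK, hwc, hwK, hval⟩ := ih x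
        have hzw : ((τ ^ i) x : ↥K) = (⟨z, hzK⟩ : ↥K) + ⟨w, hwK⟩ := by
          apply Subtype.ext
          rw [val_add]
          show (((τ ^ i) x : ↥K) : G) = z * w * ⁅w, z⁆ ^ h
          rw [central_comm_left hwc, one_pow, mul_one, hval]
        have hτx : (τ ^ (i + 1)) x = τ ⟨z, hzK⟩ := by
          rw [pow_succ', Module.End.mul_apply, hzw, map_add,
            tau_central ⟨w, hwK⟩ hwc, add_zero]
        refine ⟨⁅a, z⁆, ⁅z⁻¹, a * z * a⁻¹⁆ ^ h, ?_, ?_, ?_, ?_, ?_⟩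
        · have h1 : ⁅z, a⁆ ∈ ⁅(⊤ : Subgroup G).lowerCentralSeries i, (⊤ : Subgroup G)⁆ :=
            Subgroup.commutator_mem_commutator hz (Subgroup.mem_top a)
          have h2 : ⁅a, z⁆ = ⁅z, a⁆⁻¹ := (commutatorElement_inv z a).symm
          have h3 : (⊤ : Subgroup G).lowerCentralSeries (i + 1) = ⁅(⊤ : Subgroup G).lowerCentralSeries i, (⊤ : Subgroup G)⁆ := rfl
          rw [h3, h2]
          exact inv_mem h1
        · have h4 : ⁅a, z⁆ = (a * z * a⁻¹) * z⁻¹ := by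
            exact commutatorElement_def a z
          rw [h4]; exact mul_mem (hnorm a z hzK) (inv_mem hzK)
        · exact pow_mem (hcent _ _ (inv_mem hzK) (hnorm a z hzK)) h
        · exact pow_mem (commK_mem (inv_mem hzK) (hnorm a z hzK)) h
        · rw [hτx]; exact tau_val z hzK
  have hτc : τ ^ (c + 1) = 0 := by
    apply LinearMap.ext
    intro x
    obtain ⟨z, w, hz, hzK, hwc, hwK, hval⟩ := hdecomp c x
    rw [hnil, Subgroup.mem_bot] at hz
    subst hz
    have hc' : (τ ^ c) x = ⟨w, hwK⟩ := Subtype.ext (by rw [hval, one_mul])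
    rw [pow_succ', Module.End.mul_apply, hc', tau_central _ hwc, LinearMap.zero_apply]
  have hστ : σ = 1 + τ := by show σ = 1 + (σ - 1); abel
  have hσq : σ ^ q = 1 := by
    rw [hστ, (Commute.one_left τ).add_pow q, Finset.sum_eq_single q]
    · simp
    · intro m hmem hmne
      have hmlt : m < q := lt_of_le_of_ne (Nat.lt_succ_iff.mp (Finset.mem_range.mp hmem)) hmne
      rcases Nat.eq_zero_or_pos m with hm0 | hmpos
      · subst hm0
        have hτq : τ ^ q = 0 := by
          have hqe : q = (q - (c + 1)) + (c + 1) := (Nat.sub_add_cancel hq1).symm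
          rw [hqe, pow_add, hτc, mul_zero]
        simp [hτq]
      · rw [cast_zero _ (hqp m hmpos hmlt), mul_zero]
    · intro hq
      exact absurd (Finset.self_mem_range_succ q) hq
  have hpowval : ∀ (n : ℕ) (x : ↥K), (((σ ^ n) x : ↥K) : G) = a ^ n * x * (a ^ n)⁻¹ := by
    intro n
    induction n with
    | zero =>
        intro x
        rw [pow_zero, Module.End.one_apply, pow_zero]
        rw [one_mul, inv_one, mul_one]
    | succ n ih =>
        intro x
        rw [pow_succ', Module.End.mul_apply, sigma_val, ih]
        group
  have happ : ((σ ^ q) ⟨v, hv⟩ : ↥K) = ⟨v, hv⟩ := by rw [hσq, Module.End.one_apply]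
  have hfin := hpowval q ⟨v, hv⟩
  rw [happ] at hfin
  have hfin2 : a ^ q * v * (a ^ q)⁻¹ = v := hfin.symm
  rw [mul_inv_eq_iff_eq_mul] at hfin2
  exact hfin2


universe u

lemma aux_main {p : ℕ} (hp : p.Prime) (hodd : p ≠ 2) (c k : ℕ) (hc : 0 < c)
    (hck : c + 1 ≤ p ^ (k - 1)) :
    ∀ (n : ℕ) (G : Type u) (_ : Group G) (_ : Finite G),
      Nat.card G = n → (⊤ : Subgroup G).lowerCentralSeries c = ⊥ →
      ∀ y : G, Subgroup.zpowers y ≤ (⊤ : Subgroup G).lowerCentralSeries (c - 1) →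
      ⁅subPow (⊤ : Subgroup G) (p ^ k) ⊔ Subgroup.zpowers y,
        subPow (⊤ : Subgroup G) (p ^ k) ⊔ Subgroup.zpowers y⁆ ≤
        subPow (subPow (⊤ : Subgroup G) (p ^ k) ⊔ Subgroup.zpowers y) p := by
  intro n
  induction n using Nat.strong_induction_on with
  | _ n IH =>
    intro G instG instF hcard hnil y hy
    classical
    set q : ℕ := p ^ k with hqdef
    set K : Subgroup G := subPow (⊤ : Subgroup G) q ⊔ Subgroup.zpowers y with hKdef
    set M : Subgroup G := subPow K p with hMdef
    -- y is central
    have hyc : y ∈ Subgroup.center G := by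
      rw [Subgroup.mem_center_iff]
      intro g
      have h1 : ⁅y, g⁆ ∈ (⊤ : Subgroup G).lowerCentralSeries c := by
        have h2 : ⁅y, g⁆ ∈ ⁅(⊤ : Subgroup G).lowerCentralSeries (c - 1), (⊤ : Subgroup G)⁆ :=
          Subgroup.commutator_mem_commutator (hy (Subgroup.mem_zpowers y)) (Subgroup.mem_top g)
        have h3 : (⊤ : Subgroup G).lowerCentralSeries ((c - 1) + 1) =
            ⁅(⊤ : Subgroup G).lowerCentralSeries (c - 1), (⊤ : Subgroup G)⁆ := rfl
        have hc1 : c - 1 + 1 = c := by omega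
        rw [← h3, hc1] at h2
        exact h2
      rw [hnil, Subgroup.mem_bot] at h1
      exact (commutatorElement_eq_one_iff_commute.mp h1).symm.eq
    -- generating set description of K
    have hKgen : K = Subgroup.closure ({x : G | ∃ g : G, g ^ q = x} ∪ {y}) := by
      rw [Subgroup.closure_union, hKdef]
      congr 1
      · unfold subPow
        congr 1
        ext x
        simp
      · exact Subgroup.zpowers_eq_closure y
    have hKnormal : K.Normal := by
      rw [hKgen]
      apply closure_normal_of_conj
      rintro g s (⟨g', rfl⟩ | rfl)
      · have : g * g' ^ q * g⁻¹ = (g * g' * g⁻¹) ^ q := (conj_pow' g g' q).symm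
        rw [this]
        exact Subgroup.subset_closure (Or.inl ⟨g * g' * g⁻¹, rfl⟩)
      · rw [conj_central hyc]
        exact Subgroup.subset_closure (Or.inr rfl)
    have hMnormal : M.Normal := by
      rw [hMdef]
      unfold subPow
      apply closure_normal_of_conj
      rintro g s ⟨x, hx, rfl⟩
      have : g * x ^ p * g⁻¹ = (g * x * g⁻¹) ^ p := (conj_pow' g x p).symm
      rw [this]
      exact Subgroup.subset_closure ⟨g * x * g⁻¹, hKnormal.conj_mem x hx g, rfl⟩
    -- the quotient step
    have key : ∀ N : Subgroup G, N.Normal → N ≠ ⊥ → ⁅K, K⁆ ≤ M ⊔ N := by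
      intro N hNn hNne
      haveI := hNn
      set π : G →* G ⧸ N := QuotientGroup.mk' N with hπdef
      have hπs : Function.Surjective π := QuotientGroup.mk'_surjective N
      have hlt : Nat.card (G ⧸ N) < n := by
        have h1 : Nat.card G = Nat.card (G ⧸ N) * Nat.card N :=
          Subgroup.card_eq_card_quotient_mul_card_subgroup N
        have h2 : 1 < Nat.card N := (Subgroup.one_lt_card_iff_ne_bot (H := N)).mpr hNne
        have h3 : 0 < Nat.card (G ⧸ N) := Nat.card_pos
        rw [← hcard, h1]
        exact (lt_mul_iff_one_lt_right h3).mpr h2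
      have hnil' : (⊤ : Subgroup (G ⧸ N)).lowerCentralSeries c = ⊥ := by
        rw [← lcs_map hπs c, hnil, Subgroup.map_bot]
      have hy' : Subgroup.zpowers (π y) ≤ (⊤ : Subgroup (G ⧸ N)).lowerCentralSeries (c - 1) := by
        rw [← MonoidHom.map_zpowers, ← lcs_map hπs (c - 1)]
        exact Subgroup.map_mono hy
      haveI : Finite (G ⧸ N) := Quotient.finite _
      have happlied := IH (Nat.card (G ⧸ N)) hlt (G ⧸ N) inferInstance inferInstance rfl hnil' (π y) hy'
      have hmapK : Subgroup.map π K =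
          subPow (⊤ : Subgroup (G ⧸ N)) q ⊔ Subgroup.zpowers (π y) := by
        rw [hKdef, Subgroup.map_sup, map_subPow, Subgroup.map_top_of_surjective π hπs,
          MonoidHom.map_zpowers]
      rw [← hmapK, ← Subgroup.map_commutator, ← map_subPow] at happlied
      calc ⁅K, K⁆ ≤ Subgroup.comap π (Subgroup.map π ⁅K, K⁆) := Subgroup.le_comap_map (f := π) ⁅K, K⁆
        _ ≤ Subgroup.comap π (Subgroup.map π (subPow K p)) := Subgroup.comap_mono happlied
        _ = subPow K p ⊔ N := by rw [Subgroup.comap_map_eq, QuotientGroup.ker_mk']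
    by_cases hM : M = ⊥
    · -- the hard case : K has exponent p
      -- find the last nontrivial term of the lower central series
      have hex : ∃ i, (⊤ : Subgroup G).lowerCentralSeries i = ⊥ := ⟨c, hnil⟩
      set j : ℕ := Nat.find hex with hjdef
      have hjspec : (⊤ : Subgroup G).lowerCentralSeries j = ⊥ := Nat.find_spec hex
      rcases Nat.eq_zero_or_pos j with hj0 | hjpos
      · -- G is trivial
        have htop : (⊤ : Subgroup G) = ⊥ := by
          rw [← Subgroup.lowerCentralSeries_zero (S := (⊤ : Subgroup G)), ← hj0]
          exact hjspec
        have : ⁅K, K⁆ ≤ ⊥ := htop ▸ le_top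
        exact this.trans bot_le
      · set N : Subgroup G := (⊤ : Subgroup G).lowerCentralSeries (j - 1) with hNdef
        have hNne : N ≠ ⊥ := by
          rw [hNdef]
          exact Nat.find_min hex (by rw [← hjdef]; omega)
        have hNcent : N ≤ Subgroup.center G := by
          intro x hx
          rw [Subgroup.mem_center_iff]
          intro g
          have h1 : ⁅x, g⁆ ∈ ⁅(⊤ : Subgroup G).lowerCentralSeries (j - 1), (⊤ : Subgroup G)⁆ :=
            Subgroup.commutator_mem_commutator hx (Subgroup.mem_top g)
          have h3 : (⊤ : Subgroup G).lowerCentralSeries ((j - 1) + 1) =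
              ⁅(⊤ : Subgroup G).lowerCentralSeries (j - 1), (⊤ : Subgroup G)⁆ := rfl
          have hj1 : j - 1 + 1 = j := by omega
          rw [← h3, hj1, hjspec, Subgroup.mem_bot] at h1
          exact (commutatorElement_eq_one_iff_commute.mp h1).symm.eq
        have hcomm_le : ⁅K, K⁆ ≤ Subgroup.center G := by
          have h1 := key N (by rw [hNdef]; infer_instance) hNne
          rw [hM, bot_sup_eq] at h1
          exact h1.trans hNcent
        -- hypotheses of the core lemma
        have hcent : ∀ u v : G, u ∈ K → v ∈ K → ⁅u, v⁆ ∈ Subgroup.center G :=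
          fun u v hu hv => hcomm_le (Subgroup.commutator_mem_commutator hu hv)
        have hexp : ∀ u ∈ K, u ^ p = 1 := by
          intro u hu
          have : u ^ p ∈ M := pow_mem_subPow hu p
          rwa [hM, Subgroup.mem_bot] at this
        obtain ⟨m, hm⟩ := hp.odd_of_ne_two hodd
        have h2 : 2 * (m + 1) = p + 1 := by omega
        have hq1 : c + 1 ≤ q := hck.trans (Nat.pow_le_pow_right hp.pos (Nat.sub_le k 1))
        have hqp : ∀ i, 0 < i → i < q → p ∣ q.choose i := fun i h0 hlt =>
          hp.dvd_choose_pow h0.ne' (Nat.ne_of_lt hlt)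
        have hcore : ∀ a v : G, v ∈ K → a ^ q * v = v * a ^ q := fun a v hv =>
          core_comm (fun g x hx => hKnormal.conj_mem x hx g) hcent hexp h2 hnil hq1 hqp a v hv
        -- K is abelian
        have hKcentralizer : K ≤ Subgroup.centralizer (K : Set G) := by
          conv_lhs => rw [hKgen]
          apply (Subgroup.closure_le _).mpr
          rintro x (⟨g, rfl⟩ | rfl)
          · apply Subgroup.mem_centralizer_iff.mpr
            intro v hv
            exact (hcore g v hv).symm
          · apply Subgroup.mem_centralizer_iff.mpr
            intro v hv
            exact Subgroup.mem_center_iff.mp hyc v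
        rw [hM]
        rw [Subgroup.commutator_le]
        intro g1 hg1 g2 hg2
        rw [Subgroup.mem_bot, commutatorElement_eq_one_iff_commute]
        exact Subgroup.mem_centralizer_iff.mp (hKcentralizer hg2) g1 hg1
    · have h1 := key M hMnormal hM
      rwa [sup_idem] at h1


end PkAux

/-- Let `p` be odd, `G` a finite `p`-group of nilpotency class at most `c`, `p^{k-1} ≥ c+1`,
and `C = ⟨y⟩` a cyclic subgroup with `C ≤ γ_c(G) = (⊤ : Subgroup G).lowerCentralSeries (c-1)`.
Then `G^{p^k}·C` is powerful. -/
theorem pk_powers_join_central_cyclic_is_powerful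
    {p : ℕ} (hp : p.Prime) (hodd : p ≠ 2) (c k : ℕ) (hc : 0 < c) (hk : 0 < k)
    (hck : c + 1 ≤ p ^ (k - 1))
    {G : Type*} [Group G] [Fintype G] (hG : IsPGroup p G)
    (hnil : (⊤ : Subgroup G).lowerCentralSeries c = ⊥)
    (y : G) (hy : Subgroup.zpowers y ≤ (⊤ : Subgroup G).lowerCentralSeries (c - 1))
    (K : Subgroup G) (hK : K = subPow (⊤ : Subgroup G) (p ^ k) ⊔ Subgroup.zpowers y) :
    ⁅K, K⁆ ≤ subPow K p := by
  subst hK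
  exact PkAux.aux_main hp hodd c k hc hck (Nat.card G) G inferInstance inferInstance rfl hnil y hy
end

section
/- Let G be a finite 4-central powerful 2-group that is d-generated. Then there exists a normal subgroup N of G with index |G : N| ≤ 2^d such that N² = G², N is powerful, and N is 4*-central, i.e. Ω₂(N) ≤ Z(N) and Ω₂(N) ≅ (ℤ/4ℤ)^s for some s (equivalently, every element of order dividing 2 in N lies in N²). -/
/-- `Omega₂` of a group: the subgroup generated by elements `g` with `g⁴ = 1`. -/
def Omega2 (G : Type*) [Group G] : Subgroup G :=
  Subgroup.closure {g : G | g ^ 4 = 1}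

universe u

namespace FSC

open Subgroup Pointwise
open scoped commutatorElement

variable {G : Type u} [Group G]

theorem subPow_le (N : Subgroup G) (m : ℕ) : subPow N m ≤ N :=
  (Subgroup.closure_le N).mpr (by rintro x ⟨n, hn, rfl⟩; exact pow_mem hn m)

theorem pow_mem_subPow {N : Subgroup G} {n : G} (hn : n ∈ N) (m : ℕ) : n ^ m ∈ subPow N m :=
  Subgroup.subset_closure ⟨n, hn, rfl⟩

theorem map_subPow {G' : Type*} [Group G'] (f : G →* G') (N : Subgroup G) (m : ℕ) :
    (subPow N m).map f = subPow (N.map f) m := by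
  rw [subPow, MonoidHom.map_closure]
  congr 1
  ext y
  constructor
  · rintro ⟨x, ⟨n, hn, rfl⟩, rfl⟩
    exact ⟨f n, ⟨n, hn, rfl⟩, (map_pow f n m).symm⟩
  · rintro ⟨n', ⟨n, hn, rfl⟩, rfl⟩
    exact ⟨n ^ m, ⟨n, hn, rfl⟩, map_pow f n m⟩

theorem subPow_normal (N : Subgroup G) (hN : N.Normal) (m : ℕ) : (subPow N m).Normal := by
  constructor
  intro x hx g
  have h1 : (subPow N m).map (MulAut.conj g).toMonoidHom = subPow N m := by
    rw [map_subPow]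
    congr 1
    ext y
    constructor
    · rintro ⟨n, hn, rfl⟩
      simpa using hN.conj_mem n hn g
    · intro hy
      refine ⟨g⁻¹ * y * g, by simpa using hN.conj_mem y hy g⁻¹, by simp; group⟩
  rw [← h1]
  exact ⟨x, hx, by simp⟩

instance finiteSubgroup [Finite G] : Finite (Subgroup G) :=
  Finite.of_injective (fun H => (H : Set G)) SetLike.coe_injective

theorem exists_maximal_subgroup [Finite G] (P : Subgroup G → Prop) (K0 : Subgroup G)
    (hK0 : P K0) : ∃ K, P K ∧ ∀ K', P K' → K ≤ K' → K' = K := by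
  obtain ⟨K, hK, hmax⟩ := Set.Finite.exists_maximalFor id {K : Subgroup G | P K}
    (Set.toFinite _) ⟨K0, hK0⟩
  exact ⟨K, hK, fun K' hK' hle => le_antisymm (hmax hK' hle) hle⟩

theorem adjoin_step {C B : Subgroup G} (hC : C.Normal) {g : G}
    (hg2 : g ^ 2 ∈ C) (hgD : g ∉ C ⊔ B) (hint : C ⊓ B = ⊥) :
    (C ⊔ Subgroup.zpowers g) ⊓ B = ⊥ := by
  rw [eq_bot_iff]
  rintro z ⟨hz1, hz2⟩
  have hset : (↑(C ⊔ Subgroup.zpowers g) : Set G) = (↑C : Set G) * ↑(Subgroup.zpowers g) :=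
    Subgroup.normal_mul C (Subgroup.zpowers g)
  have hz1' : z ∈ (↑C : Set G) * ↑(Subgroup.zpowers g) := by rw [← hset]; exact hz1
  obtain ⟨c, hc, w, hw, rfl⟩ := hz1'
  obtain ⟨j, rfl⟩ := Subgroup.mem_zpowers_iff.mp hw
  have hg2' : (g ^ (2 : ℤ)) ∈ C := by rw [zpow_two, ← pow_two]; exact hg2
  rcases Int.even_or_odd j with ⟨t, ht⟩ | ⟨t, ht⟩
  · have : g ^ j ∈ C := by
      rw [ht, ← two_mul, zpow_mul]
      exact Subgroup.zpow_mem C hg2' t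
    have hz : c * g ^ j ∈ C ⊓ B := ⟨mul_mem hc this, hz2⟩
    rw [hint] at hz
    exact hz
  · exfalso
    apply hgD
    have hgj : g ^ j = (g ^ (2:ℤ)) ^ t * g := by
      rw [← zpow_mul, ← zpow_add_one, ht, two_mul]
    have : g = ((g ^ (2:ℤ)) ^ t)⁻¹ * c⁻¹ * (c * g ^ j) := by
      rw [hgj]; group
    rw [this]
    have h1 : ((g ^ (2:ℤ)) ^ t)⁻¹ ∈ C ⊔ B :=
      Subgroup.mem_sup_left (inv_mem (Subgroup.zpow_mem C hg2' t))
    have h2 : c⁻¹ ∈ C ⊔ B := Subgroup.mem_sup_left (inv_mem hc)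
    have h3 : c * g ^ j ∈ C ⊔ B := Subgroup.mem_sup_right hz2
    exact mul_mem (mul_mem h1 h2) h3

theorem comm_of_exp_two (h2 : ∀ x : G, x ^ 2 = 1) (x y : G) : x * y = y * x := by
  have hinv : ∀ a : G, a⁻¹ = a := fun a =>
    inv_eq_of_mul_eq_one_right (by rw [← pow_two]; exact h2 a)
  have h : (x * y)⁻¹ = x * y := hinv _
  rw [mul_inv_rev, hinv, hinv] at h
  exact h.symm

theorem card_closure_le_of_exp_two [Finite G] (h2 : ∀ x : G, x ^ 2 = 1) (T : Finset G) :
    Nat.card (Subgroup.closure (T : Set G)) ≤ 2 ^ T.card := by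
  classical
  induction T using Finset.induction_on with
  | empty => simp [Subgroup.closure_empty]
  | @insert a T ha ih =>
    rw [Finset.coe_insert, ← Set.singleton_union, Subgroup.closure_union,
      ← Subgroup.zpowers_eq_closure]
    have hnormal : (Subgroup.closure (T : Set G)).Normal :=
      ⟨fun n hn g => by rw [comm_of_exp_two h2 g n, mul_assoc, mul_inv_cancel, mul_one]; exact hn⟩
    have hset : (↑(Subgroup.zpowers a ⊔ Subgroup.closure (T : Set G)) : Set G)
        = (↑(Subgroup.zpowers a) : Set G) * (↑(Subgroup.closure (T : Set G)) : Set G) := by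
      rw [← Subgroup.mul_normal (Subgroup.zpowers a) (Subgroup.closure (T : Set G))]
    have hsurj : Function.Surjective
        (fun p : (Subgroup.zpowers a) × (Subgroup.closure (T : Set G)) =>
          (⟨p.1 * p.2, by
            have h1 : (p.1 : G) ∈ Subgroup.zpowers a ⊔ Subgroup.closure (T : Set G) :=
              Subgroup.mem_sup_left p.1.2
            have h2 : (p.2 : G) ∈ Subgroup.zpowers a ⊔ Subgroup.closure (T : Set G) :=
              Subgroup.mem_sup_right p.2.2
            exact mul_mem h1 h2⟩ :
            ↥(Subgroup.zpowers a ⊔ Subgroup.closure (T : Set G)))) := by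
      rintro ⟨z, hz⟩
      have : z ∈ (↑(Subgroup.zpowers a) : Set G) * ↑(Subgroup.closure (T : Set G)) := by
        rw [← hset]; exact hz
      obtain ⟨u, hu, v, hv, rfl⟩ := this
      exact ⟨(⟨u, hu⟩, ⟨v, hv⟩), rfl⟩
    have hcard := Nat.card_le_card_of_surjective _ hsurj
    rw [Nat.card_prod] at hcard
    have hz : Nat.card (Subgroup.zpowers a) ≤ 2 := by
      rw [Nat.card_zpowers]
      exact Nat.le_of_dvd (by norm_num) (orderOf_dvd_of_pow_eq_one (h2 a))
    calc Nat.card (Subgroup.zpowers a ⊔ Subgroup.closure (T : Set G) : Subgroup G)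
        ≤ Nat.card (Subgroup.zpowers a) * Nat.card (Subgroup.closure (T : Set G)) := hcard
      _ ≤ 2 * 2 ^ T.card := Nat.mul_le_mul hz ih
      _ = 2 ^ (insert a T).card := by rw [Finset.card_insert_of_notMem ha, pow_succ]; ring


/-- The chain of power subgroups of a 2-group. -/
def QP (G : Type u) [Group G] (i : ℕ) : Subgroup G := subPow ⊤ (2 ^ i)

theorem QP_normal (i : ℕ) : (QP G i).Normal := subPow_normal ⊤ inferInstance _

theorem mem_QP (x : G) (i : ℕ) : x ^ (2 ^ i) ∈ QP G i := pow_mem_subPow (mem_top x) _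

theorem pow_two_succ (x : G) (i : ℕ) : x ^ (2 ^ (i + 1)) = (x ^ (2 ^ i)) ^ 2 := by
  rw [← pow_mul, pow_succ]

theorem QP_zero : QP G 0 = ⊤ := by
  rw [eq_top_iff]
  intro x _
  have := pow_mem_subPow (mem_top x) 1
  rwa [pow_one] at this

theorem QP_succ_le (i : ℕ) : QP G (i + 1) ≤ QP G i := by
  apply (Subgroup.closure_le _).mpr
  rintro x ⟨n, -, rfl⟩
  rw [pow_succ, mul_comm, pow_mul]
  exact pow_mem_subPow (mem_top _) _

theorem map_QP {G' : Type*} [Group G'] (f : G →* G') (hf : Function.Surjective f) (i : ℕ) :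
    (QP G i).map f = QP G' i := by
  rw [QP, map_subPow, Subgroup.map_top_of_surjective f hf]; rfl

theorem comm_sq (s w : G) : ⁅s ^ 2, w⁆ = s * ⁅s, w⁆ * s⁻¹ * ⁅s, w⁆ := by
  simp only [commutatorElement_def, pow_two]
  group

/-- exponent-2 quotient triviality -/
theorem eq_one_of_subPow_top [Finite G] (h2G : IsPGroup 2 G)
    (h : subPow (⊤ : Subgroup G) 2 = ⊤) : ∀ x : G, x = 1 := by
  classical
  have hsurj : Function.Surjective (Abelianization.of : G →* Abelianization G) := by
    intro a; exact Quotient.exists_rep a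
  -- every element of A is a square
  have hSq : ∀ a : Abelianization G, ∃ b : Abelianization G, b ^ 2 = a := by
    intro a
    obtain ⟨x, rfl⟩ := hsurj a
    have hx : Abelianization.of x ∈ (subPow (⊤ : Subgroup G) 2).map (Abelianization.of : G →* Abelianization G) := by
      refine ⟨x, ?_, rfl⟩
      rw [h]; trivial
    rw [map_subPow] at hx
    have : subPow ((⊤ : Subgroup G).map (Abelianization.of : G →* Abelianization G)) 2 ≤
        { carrier := {a : Abelianization G | ∃ b : Abelianization G, b ^ 2 = a}
          one_mem' := ⟨1, one_pow 2⟩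
          mul_mem' := by rintro _ _ ⟨b, rfl⟩ ⟨c, rfl⟩; exact ⟨b * c, mul_pow b c 2⟩
          inv_mem' := by rintro _ ⟨b, rfl⟩; exact ⟨b⁻¹, by rw [inv_pow]⟩ } := by
      apply (Subgroup.closure_le _).mpr
      rintro _ ⟨n, -, rfl⟩
      exact ⟨n, rfl⟩
    exact this hx
  have hinj : Function.Injective (fun a : Abelianization G => a ^ 2) :=
    Finite.injective_iff_surjective.mpr (fun a => hSq a)
  have h2A : IsPGroup 2 (Abelianization G) := IsPGroup.to_quotient h2G _
  have htriv : ∀ a : Abelianization G, a = 1 := by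
    intro a
    obtain ⟨k, hk⟩ := h2A a
    induction k generalizing a with
    | zero => simpa using hk
    | succ k ih =>
      have : (a ^ (2 ^ k)) ^ 2 = (1 : Abelianization G) ^ 2 := by
        rw [one_pow, ← pow_mul, ← pow_succ]; exact hk
      have h9 : a ^ 2 ^ k = 1 := by
        have := hinj this
        simpa using this
      exact ih a h9
  -- so commutator G = ⊤
  have hcomm : commutator G = ⊤ := by
    rw [eq_top_iff]
    intro x _
    have : Abelianization.of x = 1 := htriv _
    exact (QuotientGroup.eq_one_iff x).mp this
  -- nilpotency
  haveI : Fact (Nat.Prime 2) := ⟨by norm_num⟩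
  haveI hnil : Group.IsNilpotent G := h2G.isNilpotent
  obtain ⟨n, hn⟩ := _root_.nilpotent_iff_lowerCentralSeries.mp hnil
  have hlcs : ∀ m, (⊤ : Subgroup G).lowerCentralSeries m = ⊤ := by
    intro m
    induction m with
    | zero => simp
    | succ m ih =>
      rw [Subgroup.lowerCentralSeries_succ, ih]
      have h8 : _root_.commutator G = Subgroup.closure
          {x : G | ∃ p ∈ (⊤ : Subgroup G), ∃ q ∈ (⊤ : Subgroup G), p * q * p⁻¹ * q⁻¹ = x} := by
        rw [_root_.commutator_def, Subgroup.commutator_def]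
        simp only [commutatorElement_def]
      exact hcomm
  intro x
  have : x ∈ (⊤ : Subgroup G).lowerCentralSeries n := by rw [hlcs n]; trivial
  rw [hn] at this
  simpa using this

theorem eq_bot_of_le_sq_sup_comm [Finite G] (h2G : IsPGroup 2 G) {K : Subgroup G}
    (hK : K.Normal) (h : K ≤ subPow K 2 ⊔ ⁅K, ⊤⁆) : K = ⊥ := by
  haveI := hK
  set N : Subgroup G := ⁅K, ⊤⁆ with hN
  haveI : N.Normal := by rw [hN]; infer_instance
  set ρ := QuotientGroup.mk' N with hρ
  have hρs : Function.Surjective ρ := QuotientGroup.mk'_surjective N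
  have hmapN : N.map ρ = ⊥ := by
    rw [Subgroup.map_eq_bot_iff, QuotientGroup.ker_mk']
  have h1 : K.map ρ ≤ subPow (K.map ρ) 2 := by
    calc K.map ρ ≤ (subPow K 2 ⊔ ⁅K, ⊤⁆).map ρ := Subgroup.map_mono h
      _ = (subPow K 2).map ρ ⊔ N.map ρ := by rw [Subgroup.map_sup]
      _ = subPow (K.map ρ) 2 ⊔ ⊥ := by rw [map_subPow, hmapN]
      _ = subPow (K.map ρ) 2 := sup_bot_eq _
  have h2 : subPow (K.map ρ) 2 = K.map ρ := le_antisymm (subPow_le _ _) h1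
  -- transfer to the subgroup as a group
  have h3 : subPow (⊤ : Subgroup (K.map ρ)) 2 = ⊤ := by
    apply Subgroup.map_injective (K.map ρ).subtype_injective
    rw [map_subPow]
    have htop : (⊤ : Subgroup (K.map ρ)).map (K.map ρ).subtype = K.map ρ := by
      simp [← MonoidHom.range_eq_map, Subgroup.range_subtype]
    rw [htop, h2]
  have h2K : IsPGroup 2 (K.map ρ) := IsPGroup.to_subgroup (IsPGroup.to_quotient h2G N) _
  have htriv := eq_one_of_subPow_top h2K h3
  have h4 : K.map ρ = ⊥ := by
    rw [eq_bot_iff]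
    intro z hz
    have : (⟨z, hz⟩ : K.map ρ) = 1 := htriv _
    simpa [Subgroup.mem_bot] using congrArg Subtype.val this
  have h5 : K ≤ N := by
    have := (Subgroup.map_eq_bot_iff _).mp h4
    rwa [hρ, QuotientGroup.ker_mk'] at this
  have h6 : K = N := le_antisymm h5 (by
    rw [hN]
    exact (Subgroup.commutator_le).mpr fun k hk g _ => by
      have h7 : g * k⁻¹ * g⁻¹ ∈ K := hK.conj_mem _ (inv_mem hk) g
      have : ⁅k, g⁆ = k * (g * k⁻¹ * g⁻¹) := by group
      rw [this]; exact mul_mem hk h7)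
  -- descending through the lower central series
  haveI : Fact (Nat.Prime 2) := ⟨by norm_num⟩
  haveI hnil : Group.IsNilpotent G := h2G.isNilpotent
  obtain ⟨n, hn⟩ := _root_.nilpotent_iff_lowerCentralSeries.mp hnil
  have hlcs : ∀ m, K ≤ (⊤ : Subgroup G).lowerCentralSeries m := by
    intro m
    induction m with
    | zero => simp
    | succ m ih =>
      rw [Subgroup.lowerCentralSeries_succ]
      calc K = ⁅K, ⊤⁆ := h6
        _ ≤ ⁅(⊤ : Subgroup G).lowerCentralSeries m, ⊤⁆ := Subgroup.commutator_mono ih le_rfl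
  rw [eq_bot_iff, ← hn]
  exact hlcs n

theorem descent [Finite G] (h2G : IsPGroup 2 G) {H L : Subgroup G} (hH : H.Normal)
    (hL : L.Normal) (h : H ≤ L ⊔ subPow H 2 ⊔ ⁅H, ⊤⁆) : H ≤ L := by
  haveI := hH; haveI := hL
  set π := QuotientGroup.mk' L with hπ
  have hπs : Function.Surjective π := QuotientGroup.mk'_surjective L
  have hmapL : L.map π = ⊥ := by rw [Subgroup.map_eq_bot_iff, QuotientGroup.ker_mk']
  have h1 : H.map π ≤ subPow (H.map π) 2 ⊔ ⁅H.map π, ⊤⁆ := by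
    calc H.map π ≤ (L ⊔ subPow H 2 ⊔ ⁅H, ⊤⁆).map π := Subgroup.map_mono h
      _ = L.map π ⊔ (subPow H 2).map π ⊔ Subgroup.map π ⁅H, ⊤⁆ := by rw [Subgroup.map_sup, Subgroup.map_sup]
      _ = ⊥ ⊔ subPow (H.map π) 2 ⊔ ⁅H.map π, (⊤ : Subgroup G).map π⁆ := by
          rw [hmapL, map_subPow, Subgroup.map_commutator]
      _ = subPow (H.map π) 2 ⊔ ⁅H.map π, ⊤⁆ := by
          rw [bot_sup_eq, Subgroup.map_top_of_surjective π hπs]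
  have h2 : H.map π = ⊥ :=
    eq_bot_of_le_sq_sup_comm (IsPGroup.to_quotient h2G L) (hH.map π hπs) h1
  have := (Subgroup.map_eq_bot_iff _).mp h2
  rwa [hπ, QuotientGroup.ker_mk'] at this


/-- The subgroup of central elements of order dividing 2. -/
def centerTwo (G : Type u) [Group G] : Subgroup G where
  carrier := {z | z ∈ Subgroup.center G ∧ z ^ 2 = 1}
  one_mem' := ⟨Subgroup.one_mem _, one_pow 2⟩
  mul_mem' := by
    rintro a b ⟨ha, ha2⟩ ⟨hb, hb2⟩
    refine ⟨Subgroup.mul_mem _ ha hb, ?_⟩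
    have hc : Commute a b := (Subgroup.mem_center_iff.mp ha b).symm
    rw [hc.mul_pow, ha2, hb2, one_mul]
  inv_mem' := by
    rintro a ⟨ha, ha2⟩
    exact ⟨Subgroup.inv_mem _ ha, by rw [inv_pow, ha2, inv_one]⟩

theorem step_aux (j : ℕ)
    (IHj : ∀ (G' : Type u) [Group G'] [Finite G'], IsPGroup 2 G' →
      ⁅(⊤ : Subgroup G'), ⊤⁆ ≤ QP G' 2 → ⁅QP G' j, ⊤⁆ ≤ QP G' (j + 2)) :
    ∀ (n : ℕ) (G : Type u) [Group G] [Finite G], Nat.card G ≤ n → IsPGroup 2 G →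
      ⁅(⊤ : Subgroup G), ⊤⁆ ≤ QP G 2 → ⁅QP G (j + 1), ⊤⁆ ≤ QP G (j + 3) := by
  intro n
  induction n with
  | zero =>
    intro G _ _ hcard _ _
    exact absurd hcard (by simpa using Nat.card_pos.ne')
  | succ n IH =>
    intro G _ _ hcard h2G hpow
    haveI hQn : ∀ i, (QP G i).Normal := fun i => QP_normal i
    set H : Subgroup G := ⁅QP G (j + 1), ⊤⁆ with hHdef
    haveI : (QP G (j+1)).Normal := hQn _
    haveI : (QP G (j+3)).Normal := hQn _
    haveI hHn : H.Normal := by rw [hHdef]; infer_instance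
    haveI : (subPow H 2).Normal := subPow_normal H hHn 2
    haveI : (⁅H, ⊤⁆ : Subgroup G).Normal := by infer_instance
    set L : Subgroup G := QP G (j + 3) with hLdef
    set V : Subgroup G := L ⊔ subPow H 2 ⊔ ⁅H, ⊤⁆ with hVdef
    haveI hVn : V.Normal := by rw [hVdef]; infer_instance
    by_cases hV : V = ⊥
    · -- direct argument in G
      have hsups := sup_eq_bot_iff.mp hV
      have hsups2 := sup_eq_bot_iff.mp hsups.1
      have hL : L = ⊥ := hsups2.1
      have hs2 : subPow H 2 = ⊥ := hsups2.2
      have hcz : (⁅H, ⊤⁆ : Subgroup G) = ⊥ := hsups.2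
      -- facts
      have hQ3 : ∀ x : G, x ^ 2 ^ (j + 3) = 1 := by
        intro x
        have := mem_QP x (j + 3)
        rw [← hLdef, hL, Subgroup.mem_bot] at this
        exact this
      have hH2 : ∀ h ∈ H, h ^ 2 = 1 := by
        intro h hh
        have := pow_mem_subPow hh 2
        rw [hs2, Subgroup.mem_bot] at this
        exact this
      have hHc : ∀ h ∈ H, ∀ g : G, Commute h g := by
        intro h hh g
        have : ⁅h, g⁆ ∈ (⁅H, ⊤⁆ : Subgroup G) :=
          Subgroup.commutator_mem_commutator hh (Subgroup.mem_top g)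
        rw [hcz, Subgroup.mem_bot] at this
        exact commutatorElement_eq_one_iff_commute.mp this
      -- Step A : QP G (j+2) is central
      have hA : QP G (j + 2) ≤ Subgroup.center G := by
        apply (Subgroup.closure_le _).mpr
        rintro _ ⟨y, -, rfl⟩
        simp only [SetLike.mem_coe]
        rw [Subgroup.mem_center_iff]
        intro w
        set s := y ^ 2 ^ (j + 1) with hs
        have hd : ⁅s, w⁆ ∈ H :=
          Subgroup.commutator_mem_commutator (mem_QP y (j + 1)) (Subgroup.mem_top w)
        have hcomm : ⁅s ^ 2, w⁆ = 1 := by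
          rw [comm_sq]
          have h1 : s * ⁅s, w⁆ * s⁻¹ = ⁅s, w⁆ := by
            rw [← (hHc _ hd s).eq]; group
          rw [h1, ← pow_two]
          exact hH2 _ hd
        have : y ^ 2 ^ (j + 2) = s ^ 2 := by rw [hs, ← pow_two_succ]
        rw [this]
        exact (commutatorElement_eq_one_iff_commute.mp hcomm).symm.eq
      have hQU : QP G (j + 2) ≤ centerTwo G := by
        apply (Subgroup.closure_le _).mpr
        rintro _ ⟨y, -, rfl⟩
        simp only [SetLike.mem_coe]
        refine ⟨hA (mem_QP y (j + 2)), ?_⟩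
        rw [← pow_two_succ]
        exact hQ3 y
      -- Step B
      have hB : ∀ x w : G, ⁅x ^ 2 ^ (j + 1), w⁆ = 1 := by
        intro x w
        set s := x ^ 2 ^ j with hs
        have hc : ⁅s, w⁆ ∈ QP G (j + 2) :=
          IHj G h2G hpow (Subgroup.commutator_mem_commutator (mem_QP x j) (Subgroup.mem_top w))
        obtain ⟨hcc, hc2⟩ := hQU hc
        have h1 : x ^ 2 ^ (j + 1) = s ^ 2 := by rw [hs, ← pow_two_succ]
        rw [h1, comm_sq]
        have hcs : s * ⁅s, w⁆ = ⁅s, w⁆ * s := Subgroup.mem_center_iff.mp hcc s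
        have h2 : s * ⁅s, w⁆ * s⁻¹ = ⁅s, w⁆ := by rw [hcs]; group
        rw [h2, ← pow_two]
        exact hc2
      -- Step C
      apply (Subgroup.commutator_le).mpr
      intro a ha g _
      have hcent : QP G (j + 1) ≤ Subgroup.centralizer {g} := by
        apply (Subgroup.closure_le _).mpr
        rintro _ ⟨x, -, rfl⟩
        simp only [SetLike.mem_coe]
        rw [Subgroup.mem_centralizer_iff]
        intro h hh
        rw [Set.mem_singleton_iff] at hh
        subst hh
        exact ((commutatorElement_eq_one_iff_commute.mp (hB x h)).symm).eq
      have hmem := hcent ha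
      rw [Subgroup.mem_centralizer_iff] at hmem
      have h1 : ⁅a, g⁆ = 1 := by
        rw [commutatorElement_eq_one_iff_commute]
        exact (hmem g rfl).symm
      rw [h1]
      exact one_mem _
    · -- quotient case
      set π := QuotientGroup.mk' V with hπ
      have hπs : Function.Surjective π := QuotientGroup.mk'_surjective V
      have hcardlt : Nat.card (G ⧸ V) ≤ n := by
        have h1 : Nat.card G = Nat.card (G ⧸ V) * Nat.card V :=
          Subgroup.card_eq_card_quotient_mul_card_subgroup V
        have h2 : 1 < Nat.card V := V.one_lt_card_iff_ne_bot.mpr hV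
        have h3 : Nat.card (G ⧸ V) < Nat.card G := by
          rw [h1]
          have hq : 0 < Nat.card (G ⧸ V) := Nat.card_pos
          nlinarith
        omega
      have h2Q : IsPGroup 2 (G ⧸ V) := IsPGroup.to_quotient h2G V
      have hpowQ : ⁅(⊤ : Subgroup (G ⧸ V)), ⊤⁆ ≤ QP (G ⧸ V) 2 := by
        rw [← Subgroup.map_top_of_surjective π hπs, ← Subgroup.map_commutator,
          ← map_QP π hπs 2]
        exact Subgroup.map_mono hpow
      have hconc := IH (G ⧸ V) hcardlt h2Q hpowQ
      have hmap : H.map π ≤ ⊥ := by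
        calc H.map π = ⁅(QP G (j+1)).map π, (⊤ : Subgroup G).map π⁆ := by
              rw [hHdef, Subgroup.map_commutator]
          _ = ⁅QP (G ⧸ V) (j+1), ⊤⁆ := by
              rw [map_QP π hπs, Subgroup.map_top_of_surjective π hπs]
          _ ≤ QP (G ⧸ V) (j + 3) := hconc
          _ = (QP G (j+3)).map π := (map_QP π hπs _).symm
          _ ≤ V.map π := Subgroup.map_mono (by rw [hVdef]; exact le_sup_of_le_left le_sup_left)
          _ = ⊥ := by rw [Subgroup.map_eq_bot_iff, hπ, QuotientGroup.ker_mk']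
      have hHV : H ≤ V := by
        have := (Subgroup.map_eq_bot_iff _).mp (le_bot_iff.mp hmap)
        rwa [hπ, QuotientGroup.ker_mk'] at this
      exact descent h2G hHn (hQn (j+3)) (by rw [← hVdef]; exact hHV)


theorem QP_comm_le (j : ℕ) : ∀ (G : Type u) [Group G] [Finite G], IsPGroup 2 G →
    ⁅(⊤ : Subgroup G), ⊤⁆ ≤ QP G 2 → ⁅QP G j, ⊤⁆ ≤ QP G (j + 2) := by
  induction j with
  | zero =>
    intro G _ _ h2 hpow
    rw [QP_zero]
    exact hpow
  | succ j IHj =>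
    intro G _ _ h2 hpow
    exact step_aux j IHj (Nat.card G) G le_rfl h2 hpow

theorem sq_mul_sq (v₁ v₂ : G) :
    v₁ ^ 2 * v₂ ^ 2 = (v₁ * v₂) ^ 2 * (v₂⁻¹ * ⁅v₁⁻¹, v₂⁻¹⁆ * v₂) := by
  simp only [commutatorElement_def, pow_two]
  group

section LM
variable [Finite G] (h2G : IsPGroup 2 G) (hpow : ⁅(⊤ : Subgroup G), ⊤⁆ ≤ QP G 2)
include h2G hpow

theorem sq_decomp (i : ℕ) : ∀ u ∈ QP G (i + 1),
    ∃ v ∈ QP G i, ∃ z ∈ QP G (i + 2), u = v ^ 2 * z := by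
  have hcomm : ⁅QP G i, (⊤ : Subgroup G)⁆ ≤ QP G (i + 2) := QP_comm_le i G h2G hpow
  have hnorm := QP_normal (G := G) (i + 2)
  intro u hu
  have hle : QP G (i + 1) ≤
      { carrier := {u : G | ∃ v ∈ QP G i, ∃ z ∈ QP G (i + 2), u = v ^ 2 * z}
        one_mem' := ⟨1, one_mem _, 1, one_mem _, by simp⟩
        mul_mem' := by
          rintro a b ⟨v₁, hv₁, z₁, hz₁, rfl⟩ ⟨v₂, hv₂, z₂, hz₂, rfl⟩
          refine ⟨v₁ * v₂, mul_mem hv₁ hv₂,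
            (v₂⁻¹ * ⁅v₁⁻¹, v₂⁻¹⁆ * v₂) * ((v₂⁻¹ * v₂⁻¹) * z₁ * (v₂⁻¹ * v₂⁻¹)⁻¹) * z₂, ?_, ?_⟩
          · refine mul_mem (mul_mem ?_ ?_) hz₂
            · have h1 : ⁅v₁⁻¹, v₂⁻¹⁆ ∈ QP G (i + 2) :=
                hcomm (Subgroup.commutator_mem_commutator (inv_mem hv₁) (Subgroup.mem_top _))
              have := hnorm.conj_mem _ h1 v₂⁻¹
              simpa [mul_assoc] using this
            · exact hnorm.conj_mem _ hz₁ _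
          · simp [commutatorElement_def, pow_two, mul_assoc]
        inv_mem' := by
          rintro a ⟨v, hv, z, hz, rfl⟩
          refine ⟨v⁻¹, inv_mem hv, (v * v) * z⁻¹ * (v * v)⁻¹, hnorm.conj_mem _ (inv_mem hz) _, ?_⟩
          simp [pow_two, mul_assoc] } := by
    apply (Subgroup.closure_le _).mpr
    rintro _ ⟨x, -, rfl⟩
    exact ⟨x ^ 2 ^ i, mem_QP x i, 1, one_mem _, by rw [mul_one, pow_two_succ]⟩
  exact hle hu

theorem exists_sq_decomp : ∀ (k : ℕ), ∀ w ∈ QP G 1,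
    ∃ x : G, ∃ z ∈ QP G (k + 1), w = x ^ 2 * z := by
  intro k
  induction k with
  | zero =>
    intro w hw
    exact ⟨1, w, hw, by simp⟩
  | succ k IH =>
    intro w hw
    obtain ⟨x, z, hz, rfl⟩ := IH w hw
    obtain ⟨v, hv, z', hz', rfl⟩ := sq_decomp h2G hpow k z hz
    have hnorm := QP_normal (G := G) (k + 2)
    have hk' : v⁻¹ * ⁅x⁻¹, v⁻¹⁆ * v ∈ QP G (k + 2) := by
      have h1 : ⁅x⁻¹, v⁻¹⁆ ∈ QP G (k + 2) := by
        have h2 : ⁅v⁻¹, x⁻¹⁆ ∈ ⁅QP G k, (⊤ : Subgroup G)⁆ :=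
          Subgroup.commutator_mem_commutator (inv_mem hv) (Subgroup.mem_top _)
        have h3 : ⁅x⁻¹, v⁻¹⁆ = ⁅v⁻¹, x⁻¹⁆⁻¹ := (commutatorElement_inv _ _).symm
        rw [h3]
        exact inv_mem (QP_comm_le k G h2G hpow h2)
      have := hnorm.conj_mem _ h1 v⁻¹
      simpa [mul_assoc] using this
    refine ⟨x * v, (v⁻¹ * ⁅x⁻¹, v⁻¹⁆ * v) * z', mul_mem hk' hz', ?_⟩
    rw [← mul_assoc, sq_mul_sq]
    group

theorem exists_sq {w : G} (hw : w ∈ QP G 1) : ∃ x : G, x ^ 2 = w := by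
  haveI : Fact (Nat.Prime 2) := ⟨by norm_num⟩
  obtain ⟨n, hn⟩ := IsPGroup.iff_card.mp h2G
  have hbot : QP G (n + 1) = ⊥ := by
    rw [eq_bot_iff]
    apply (Subgroup.closure_le _).mpr
    rintro _ ⟨x, -, rfl⟩
    have h1 : x ^ 2 ^ (n + 1) = 1 := by
      have h2 : x ^ 2 ^ n = 1 := by rw [← hn]; exact pow_card_eq_one'
      rw [pow_two_succ, h2, one_pow]
    simp [h1, Subgroup.mem_bot]
  obtain ⟨x, z, hz, rfl⟩ := exists_sq_decomp h2G hpow n w hw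
  rw [hbot, Subgroup.mem_bot] at hz
  exact ⟨x, by rw [hz, mul_one]⟩

end LM

/-- The homomorphism from `Multiplicative (ZMod 4)` determined by an element of order 4. -/
def zmod4Hom {M : Type u} [CommGroup M] (x : M) (hord : orderOf x = 4) :
    Multiplicative (ZMod 4) →* M where
  toFun a := x ^ (Multiplicative.toAdd a).val
  map_one' := by
    show x ^ (0 : ZMod 4).val = 1
    rw [ZMod.val_zero, pow_zero]
  map_mul' a b := by
    show x ^ ((Multiplicative.toAdd a) + (Multiplicative.toAdd b)).val
      = x ^ (Multiplicative.toAdd a).val * x ^ (Multiplicative.toAdd b).val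
    rw [← pow_add, pow_eq_pow_iff_modEq, hord, ZMod.val_add]
    exact Nat.mod_modEq _ 4

theorem zmod4Hom_apply {M : Type u} [CommGroup M] (x : M) (hord : orderOf x = 4)
    (a : Multiplicative (ZMod 4)) :
    zmod4Hom x hord a = x ^ (Multiplicative.toAdd a).val := rfl

/-- `Fin (n+1) → β` versus `β × (Fin n → β)`, multiplicatively. -/
def finSuccMulEquiv (n : ℕ) (β : Type*) [Monoid β] :
    (β × (Fin n → β)) ≃* (Fin (n + 1) → β) where
  toEquiv := Fin.consEquiv (fun _ => β)
  map_mul' p q := by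
    funext i
    refine Fin.cases ?_ (fun j => ?_) i <;>
      simp [Fin.consEquiv, Fin.cons_zero, Fin.cons_succ]

theorem classify_aux : ∀ (n : ℕ) (M : Type u) [CommGroup M] [Finite M], Nat.card M ≤ n →
    (∀ x : M, x ^ 4 = 1) → (∀ x : M, x ^ 2 = 1 → ∃ y : M, y ^ 2 = x) →
    ∃ s : ℕ, Nonempty (M ≃* (Fin s → Multiplicative (ZMod 4))) := by
  intro n
  induction n with
  | zero =>
    intro M _ _ hcard _ _
    exact absurd hcard (by simpa using Nat.card_pos.ne')
  | succ n IH =>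
    intro M _ _ hcard h4 hsq
    by_cases htriv : ∀ x : M, x = 1
    · refine ⟨0, ⟨{
        toFun := fun _ _ => 1
        invFun := fun _ => 1
        left_inv := fun a => (htriv a).symm
        right_inv := fun f => funext fun i => i.elim0
        map_mul' := fun a b => funext fun i => i.elim0 }⟩⟩
    · obtain ⟨m, hm⟩ := not_forall.mp htriv
      -- find an element of order 4
      have hx : ∃ x : M, x ^ 2 ≠ 1 := by
        by_contra hall
        push_neg at hall
        obtain ⟨y, hy⟩ := hsq m (hall m)
        exact hm (by rw [← hy, hall y])
      obtain ⟨x, hx2⟩ := hx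
      have hord : orderOf x = 4 := by
        have hdvd : orderOf x ∣ 2 ^ 2 := orderOf_dvd_of_pow_eq_one (by norm_num; exact h4 x)
        obtain ⟨k, hk, hek⟩ := (Nat.dvd_prime_pow Nat.prime_two).mp hdvd
        interval_cases k
        · exfalso; apply hx2
          have : x = 1 := orderOf_eq_one_iff.mp (by simpa using hek)
          rw [this, one_pow]
        · exfalso; apply hx2
          have := pow_orderOf_eq_one x
          rwa [hek] at this
        · simpa using hek
      set H := Subgroup.zpowers x with hH
      obtain ⟨K, hKint, hKmax⟩ := exists_maximal_subgroup (fun K => K ⊓ H = ⊥) ⊥ (by simp)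
      -- K ⊔ H = ⊤
      have hKH : K ⊔ H = ⊤ := by
        by_contra hne
        have hg0 : ∃ g : M, g ∉ K ⊔ H := by
          by_contra hall; push_neg at hall
          exact hne (eq_top_iff.mpr fun g _ => hall g)
        obtain ⟨g₀, hg₀⟩ := hg0
        obtain ⟨g, hgD, hg2D⟩ : ∃ g : M, g ∉ K ⊔ H ∧ g ^ 2 ∈ K ⊔ H := by
          by_cases hcase : g₀ ^ 2 ∈ K ⊔ H
          · exact ⟨g₀, hg₀, hcase⟩
          · refine ⟨g₀ ^ 2, hcase, ?_⟩
            rw [← pow_mul]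
            norm_num
            rw [h4 g₀]
            exact one_mem _
        have hset : (↑(K ⊔ H) : Set M) = (↑K : Set M) * (↑H : Set M) :=
          Subgroup.mul_normal K H
        have hg2D' : (g ^ 2 : M) ∈ (↑K : Set M) * (↑H : Set M) := by rw [← hset]; exact hg2D
        obtain ⟨kk, hkk, hh, hhh, hprod⟩ := hg2D'
        replace hprod : kk * hh = g ^ 2 := hprod
        obtain ⟨j, hj⟩ := Subgroup.mem_zpowers_iff.mp hhh
        -- hh^2 = 1
        have hg4 : kk ^ 2 * hh ^ 2 = 1 := by
          rw [← mul_pow, hprod, ← pow_mul]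
          norm_num
          exact h4 g
        have hh2K : hh ^ 2 ∈ K := by
          have : hh ^ 2 = (kk ^ 2)⁻¹ := by
            rw [eq_inv_iff_mul_eq_one, mul_comm]; exact hg4
          rw [this]; exact inv_mem (pow_mem hkk 2)
        have hh2 : hh ^ 2 = 1 := by
          have : hh ^ 2 ∈ K ⊓ H := ⟨hh2K, pow_mem hhh 2⟩
          rwa [hKint, Subgroup.mem_bot] at this
        -- x ^ (2 j) = 1, so j is even
        have hxj : x ^ (2 * j) = 1 := by
          rw [mul_comm, zpow_mul]
          rw [← hj] at hh2
          push_cast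
          rw [show ((2:ℤ)) = ((2:ℕ):ℤ) by norm_num, zpow_natCast]
          exact hh2
        have h4dvd : (4 : ℤ) ∣ 2 * j := by
          have := orderOf_dvd_iff_zpow_eq_one.mpr hxj
          rwa [hord] at this
        obtain ⟨t, ht⟩ : ∃ t : ℤ, j = 2 * t := ⟨j / 2, by omega⟩
        -- replace g by g' := g * x^(-t)
        set g' := g * x ^ (-t) with hg'
        have hg'2 : g' ^ 2 ∈ K := by
          have : g' ^ 2 = g ^ 2 * x ^ (-(2 * t)) := by
            rw [hg', mul_pow, ← zpow_natCast (x ^ (-t)), ← zpow_mul]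
            norm_num
            rw [mul_comm t 2]
          rw [this, ← hprod, ← hj, ht, mul_assoc, ← zpow_add]
          simpa using hkk
        have hg'D : g' ∉ K ⊔ H := by
          intro hmem
          apply hgD
          have : g = g' * x ^ t := by rw [hg', mul_assoc, ← zpow_add]; simp
          rw [this]
          exact mul_mem hmem (Subgroup.mem_sup_right (Subgroup.zpow_mem_zpowers x t))
        have hadj := adjoin_step (Subgroup.normal_of_comm K) hg'2 hg'D hKint
        have heq := hKmax _ hadj le_sup_left
        apply hg'D
        apply Subgroup.mem_sup_left
        rw [← heq]
        exact Subgroup.mem_sup_right (Subgroup.mem_zpowers g')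
      -- the product decomposition
      have hcommHK : ∀ (a : ↥H) (b : ↥K), Commute (H.subtype a) (K.subtype b) :=
        fun a b => Commute.all _ _
      set φ := MonoidHom.noncommCoprod H.subtype K.subtype hcommHK with hφ
      have hinj : Function.Injective φ := by
        rw [injective_iff_map_eq_one]
        rintro ⟨a, b⟩ hab
        have h1 : (a : M) * (b : M) = 1 := hab
        have ha : (a : M) ∈ K ⊓ H := by
          refine ⟨?_, a.2⟩
          have : (a : M) = (b : M)⁻¹ := eq_inv_of_mul_eq_one_left h1
          rw [this]; exact K.inv_mem b.2
        rw [hKint, Subgroup.mem_bot] at ha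
        have hb : (b : M) = 1 := by rw [ha, one_mul] at h1; exact h1
        refine Prod.ext (Subtype.ext ha) (Subtype.ext hb)
      have hsurj : Function.Surjective φ := by
        intro c
        have : c ∈ (↑(K ⊔ H) : Set M) := by rw [hKH]; trivial
        rw [Subgroup.mul_normal K H] at this
        obtain ⟨kk, hkk, hh, hhh, hprod⟩ := this
        replace hprod : kk * hh = c := hprod
        exact ⟨(⟨hh, hhh⟩, ⟨kk, hkk⟩), by rw [← hprod]; exact mul_comm _ _⟩
      set ψ := MulEquiv.ofBijective φ ⟨hinj, hsurj⟩ with hψ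
      -- properties of K
      have h4K : ∀ κ : ↥K, κ ^ 4 = 1 := fun κ => Subtype.ext (by
        push_cast
        exact h4 (κ : M))
      have hsqK : ∀ κ : ↥K, κ ^ 2 = 1 → ∃ lam : ↥K, lam ^ 2 = κ := by
        intro κ hκ
        have hκ2 : (κ : M) ^ 2 = 1 := by
          have := congrArg (Subtype.val) hκ
          push_cast at this
          exact this
        obtain ⟨y, hy⟩ := hsq (κ : M) hκ2
        have : y ∈ (↑(K ⊔ H) : Set M) := by rw [hKH]; trivial
        rw [Subgroup.mul_normal K H] at this
        obtain ⟨kk, hkk, hh, hhh, hprod⟩ := this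
        replace hprod : kk * hh = y := hprod
        have hyexp : (κ : M) = kk ^ 2 * hh ^ 2 := by rw [← hy, ← hprod, mul_pow]
        have hh2 : hh ^ 2 = 1 := by
          have hmem : hh ^ 2 ∈ K ⊓ H := by
            refine ⟨?_, pow_mem hhh 2⟩
            have : hh ^ 2 = (kk ^ 2)⁻¹ * (κ : M) := by
              rw [hyexp]; group
            rw [this]
            exact K.mul_mem (K.inv_mem (K.pow_mem hkk 2)) κ.2
          rwa [hKint, Subgroup.mem_bot] at hmem
        refine ⟨⟨kk, hkk⟩, Subtype.ext ?_⟩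
        push_cast
        rw [hyexp, hh2, mul_one]
      -- cardinality
      have hcardH : Nat.card ↥H = 4 := by rw [hH, Nat.card_zpowers, hord]
      have hcardM : Nat.card M = 4 * Nat.card ↥K := by
        rw [← Nat.card_congr ψ.toEquiv, Nat.card_prod, hcardH]
      have hcardK : Nat.card ↥K ≤ n := by
        have hpos : 0 < Nat.card ↥K := Nat.card_pos
        omega
      obtain ⟨s', ⟨eK⟩⟩ := IH ↥K hcardK h4K hsqK
      -- H ≃* Multiplicative (ZMod 4)
      have hfH : ∀ a, zmod4Hom x hord a ∈ H := by
        intro a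
        rw [zmod4Hom_apply]
        exact Subgroup.npow_mem_zpowers x _
      set f' : Multiplicative (ZMod 4) →* ↥H := (zmod4Hom x hord).codRestrict H hfH with hf'
      have hf'inj : Function.Injective f' := by
        rw [injective_iff_map_eq_one]
        intro a ha
        have h1 : x ^ (Multiplicative.toAdd a).val = 1 := by
          have h0 := congrArg (Subtype.val) ha
          rw [hf'] at h0
          simpa [MonoidHom.codRestrict_apply, zmod4Hom_apply] using h0
        have h2 : 4 ∣ (Multiplicative.toAdd a).val := by
          have := orderOf_dvd_of_pow_eq_one h1
          rwa [hord] at this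
        have h3 : (Multiplicative.toAdd a).val < 4 := ZMod.val_lt _
        have h4' : (Multiplicative.toAdd a).val = 0 := by omega
        have h5 : (Multiplicative.toAdd a) = 0 := (ZMod.val_eq_zero _).mp h4'
        exact h5
      have hf'bij : Function.Bijective f' := by
        rw [Nat.bijective_iff_injective_and_card]
        refine ⟨hf'inj, ?_⟩
        rw [hcardH]
        rw [Nat.card_congr (Multiplicative.toAdd (α := ZMod 4))]
        simp [Nat.card_eq_fintype_card]
      set eH := MulEquiv.ofBijective f' hf'bij with heH
      -- assemble
      refine ⟨s' + 1, ⟨?_⟩⟩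
      exact (ψ.symm.trans (MulEquiv.prodCongr eH.symm eK)).trans
        (finSuccMulEquiv s' (Multiplicative (ZMod 4)))


theorem normal_of_le_center {H : Subgroup G} (h : H ≤ Subgroup.center G) : H.Normal := by
  constructor
  intro n hn g
  have := (Subgroup.mem_center_iff.mp (h hn) g).symm
  rw [← this, mul_assoc, mul_inv_cancel, mul_one]
  exact hn

theorem normal_of_commutator_le {H : Subgroup G} (h : ⁅(⊤ : Subgroup G), ⊤⁆ ≤ H) : H.Normal := by
  constructor
  intro n hn g
  have h1 : ⁅g, n⁆ ∈ H := h (Subgroup.commutator_mem_commutator (mem_top g) (mem_top n))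
  have h2 : g * n * g⁻¹ = ⁅g, n⁆ * n := by group
  rw [h2]
  exact mul_mem h1 hn


end FSC

open Subgroup FSC in
/-- A `d`-generated finite 4-central powerful 2-group `G` has a normal subgroup `N` of index
at most `2^d` with `N² = G²`, `N` powerful, and `N` 4*-central: `Ω₂(N) ≤ Z(N)`,
`Ω₂(N) ≅ (ℤ/4ℤ)^s`, and every element of order dividing 2 in `N` lies in `N²`. -/
theorem exists_four_star_central_subgroup
    {G : Type*} [Group G] [Fintype G] (hG : IsPGroup 2 G)
    (d : ℕ) (hgen : ∃ S : Finset G, S.card ≤ d ∧ Subgroup.closure (S : Set G) = ⊤)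
    (hpowerful : ⁅(⊤ : Subgroup G), (⊤ : Subgroup G)⁆ ≤ subPow (⊤ : Subgroup G) 4)
    (h4central : Omega2 G ≤ Subgroup.center G) :
    ∃ N : Subgroup G, N.Normal ∧ N.index ≤ 2 ^ d ∧
      subPow N 2 = subPow (⊤ : Subgroup G) 2 ∧
      ⁅N, N⁆ ≤ subPow N 4 ∧
      Omega2 N ≤ Subgroup.center N ∧
      (∃ s : ℕ, Nonempty ((Omega2 N) ≃* (Fin s → Multiplicative (ZMod 4)))) ∧
      (∀ g ∈ N, g ^ 2 = 1 → g ∈ subPow N 2) := by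
  classical
  have hQP2 : QP G 2 = subPow (⊤ : Subgroup G) 4 := by norm_num [QP]
  have hQP1 : QP G 1 = subPow (⊤ : Subgroup G) 2 := by norm_num [QP]
  have hpow : ⁅(⊤ : Subgroup G), ⊤⁆ ≤ QP G 2 := by rw [hQP2]; exact hpowerful
  have hScentral : ∀ a : G, a ^ 4 = 1 → a ∈ Subgroup.center G := fun a ha =>
    h4central (Subgroup.subset_closure ha)
  -- the subgroup of elements of order dividing 4 (resp. 2)
  set Sgrp : Subgroup G :=
    { carrier := {g : G | g ^ 4 = 1}
      one_mem' := one_pow 4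
      mul_mem' := by
        intro a b ha hb
        have hc : Commute a b := (Subgroup.mem_center_iff.mp (hScentral a ha) b).symm
        show (a * b) ^ 4 = 1
        rw [hc.mul_pow, ha, hb, one_mul]
      inv_mem' := by
        intro a ha
        show (a⁻¹) ^ 4 = 1
        rw [inv_pow, ha, inv_one] } with hSgrp
  have hpow24 : ∀ a : G, a ^ 2 = 1 → a ^ 4 = 1 := by
    intro a ha
    have : a ^ 4 = (a ^ 2) ^ 2 := by rw [← pow_mul]
    rw [this, ha, one_pow]
  set Wgrp : Subgroup G :=
    { carrier := {g : G | g ^ 2 = 1}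
      one_mem' := one_pow 2
      mul_mem' := by
        intro a b ha hb
        have hc : Commute a b :=
          (Subgroup.mem_center_iff.mp (hScentral a (hpow24 a ha)) b).symm
        show (a * b) ^ 2 = 1
        rw [hc.mul_pow, ha, hb, one_mul]
      inv_mem' := by
        intro a ha
        show (a⁻¹) ^ 2 = 1
        rw [inv_pow, ha, inv_one] } with hWgrp
  have hWcentral : ∀ w : G, w ∈ Wgrp → w ∈ Subgroup.center G := fun w hw =>
    hScentral w (hpow24 w hw)
  set Wgs : Subgroup G := Wgrp ⊓ QP G 1 with hWgs
  haveI hWgrpN : Wgrp.Normal := normal_of_le_center (fun w hw => hWcentral w hw)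
  haveI hWgsN : Wgs.Normal := normal_of_le_center (fun w hw => hWcentral w hw.1)
  -- complement B of Wgs inside Wgrp
  obtain ⟨B, ⟨hBW, hBint⟩, hBmax⟩ := exists_maximal_subgroup
    (fun K => K ≤ Wgrp ∧ K ⊓ Wgs = ⊥) ⊥ ⟨bot_le, bot_inf_eq _⟩
  haveI hBN : B.Normal := normal_of_le_center (fun b hb => hWcentral b (hBW hb))
  have hWBW : B ⊔ Wgs = Wgrp := by
    apply le_antisymm (sup_le hBW inf_le_left)
    by_contra hne
    obtain ⟨w, hwW, hwD⟩ := SetLike.not_le_iff_exists.mp hne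
    have hw2 : w ^ 2 ∈ B := by
      have : w ^ 2 = 1 := hwW
      rw [this]; exact one_mem B
    have hadj := adjoin_step hBN hw2 hwD hBint
    have hle : B ⊔ Subgroup.zpowers w ≤ Wgrp :=
      sup_le hBW (by rwa [Subgroup.zpowers_le])
    have heq := hBmax _ ⟨hle, hadj⟩ le_sup_left
    apply hwD
    apply Subgroup.mem_sup_left
    rw [← heq]
    exact Subgroup.mem_sup_right (Subgroup.mem_zpowers w)
  -- complement N of B containing the squares
  have hQ1B : QP G 1 ⊓ B = ⊥ := by
    rw [eq_bot_iff]
    rintro z ⟨hz1, hz2⟩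
    have : z ∈ B ⊓ Wgs := ⟨hz2, ⟨hBW hz2, hz1⟩⟩
    rw [hBint] at this
    exact this
  obtain ⟨N, ⟨hN1, hNB⟩, hNmax⟩ := exists_maximal_subgroup
    (fun C => QP G 1 ≤ C ∧ C ⊓ B = ⊥) (QP G 1) ⟨le_rfl, hQ1B⟩
  have hcommN : ⁅(⊤ : Subgroup G), ⊤⁆ ≤ N :=
    le_trans hpow (le_trans (QP_succ_le 1) hN1)
  haveI hNnormal : N.Normal := normal_of_commutator_le hcommN
  have hNBtop : N ⊔ B = ⊤ := by
    by_contra hne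
    have hg0 : ∃ g : G, g ∉ N ⊔ B := by
      by_contra hall; push_neg at hall
      exact hne (eq_top_iff.mpr fun g _ => hall g)
    obtain ⟨g, hgD⟩ := hg0
    have hg2 : g ^ 2 ∈ N := hN1 (by simpa using mem_QP g 1)
    have hadj := adjoin_step hNnormal hg2 hgD hNB
    have hle : QP G 1 ≤ N ⊔ Subgroup.zpowers g := le_trans hN1 le_sup_left
    have heq := hNmax _ ⟨hle, hadj⟩ le_sup_left
    apply hgD
    apply Subgroup.mem_sup_left
    rw [← heq]
    exact Subgroup.mem_sup_right (Subgroup.mem_zpowers g)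
  -- decomposition of elements
  have hdecomp : ∀ x : G, ∃ nn ∈ N, ∃ b ∈ B, x = nn * b := by
    intro x
    have hx : x ∈ (↑(N ⊔ B) : Set G) := by rw [hNBtop]; trivial
    rw [Subgroup.mul_normal N B] at hx
    obtain ⟨nn, hnn, b, hb, hprod⟩ := hx
    exact ⟨nn, hnn, b, hb, hprod.symm⟩
  have hBc : ∀ b ∈ B, b ∈ Subgroup.center G := fun b hb => hWcentral b (hBW hb)
  have hB2 : ∀ b ∈ B, b ^ 2 = 1 := fun b hb => hBW hb
  have hB4 : ∀ b ∈ B, b ^ 4 = 1 := fun b hb => hpow24 b (hB2 b hb)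
  -- (c) squares
  have hsub2 : subPow N 2 = subPow (⊤ : Subgroup G) 2 := by
    apply le_antisymm
    · apply (Subgroup.closure_le _).mpr
      rintro _ ⟨n, -, rfl⟩
      exact pow_mem_subPow (mem_top n) 2
    · apply (Subgroup.closure_le _).mpr
      rintro _ ⟨x, -, rfl⟩
      obtain ⟨nn, hnn, b, hb, rfl⟩ := hdecomp x
      have hc : Commute nn b := (Subgroup.mem_center_iff.mp (hBc b hb) nn)
      have : (nn * b) ^ 2 = nn ^ 2 * b ^ 2 := hc.mul_pow 2
      rw [this, hB2 b hb, mul_one]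
      exact pow_mem_subPow hnn 2
  -- (d) powerful
  have hsub4 : ⁅N, N⁆ ≤ subPow N 4 := by
    refine le_trans (Subgroup.commutator_mono le_top le_top) (le_trans hpowerful ?_)
    apply (Subgroup.closure_le _).mpr
    rintro _ ⟨x, -, rfl⟩
    obtain ⟨nn, hnn, b, hb, rfl⟩ := hdecomp x
    have hc : Commute nn b := (Subgroup.mem_center_iff.mp (hBc b hb) nn)
    have : (nn * b) ^ 4 = nn ^ 4 * b ^ 4 := hc.mul_pow 4
    rw [this, hB4 b hb, mul_one]
    exact pow_mem_subPow hnn 4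
  -- (f) involutions lie in the squares
  have hWN : ∀ g : G, g ∈ N → g ^ 2 = 1 → g ∈ QP G 1 := by
    intro g hgN hg2
    have hgW : g ∈ Wgrp := hg2
    have hgBW : g ∈ (↑(B ⊔ Wgs) : Set G) := by rw [hWBW]; exact hgW
    rw [Subgroup.mul_normal B Wgs] at hgBW
    obtain ⟨b, hb, u, hu, hprod⟩ := hgBW
    replace hprod : b * u = g := hprod
    have hbN : b ∈ N := by
      have : b = g * u⁻¹ := by rw [← hprod]; group
      rw [this]
      exact mul_mem hgN (inv_mem (hN1 hu.2))
    have hbbot : b ∈ N ⊓ B := ⟨hbN, hb⟩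
    rw [hNB, Subgroup.mem_bot] at hbbot
    rw [← hprod, hbbot, one_mul]
    exact hu.2
  have hinvol : ∀ g ∈ N, g ^ 2 = 1 → g ∈ subPow N 2 := by
    intro g hgN hg2
    rw [hsub2, ← hQP1]
    exact hWN g hgN hg2
  -- (e) Omega2 N central in N
  have hOmegaLe : Omega2 ↥N ≤ Subgroup.center ↥N := by
    apply (Subgroup.closure_le _).mpr
    intro n hn
    have hn4 : ((n : G)) ^ 4 = 1 := by
      have : ((n ^ 4 : ↥N) : G) = ((1 : ↥N) : G) := congrArg _ hn  -- fix below
      push_cast at this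
      exact this
    simp only [SetLike.mem_coe]
    rw [Subgroup.mem_center_iff]
    intro m
    have := Subgroup.mem_center_iff.mp (hScentral _ hn4) (m : G)
    exact Subtype.ext this
  -- (g) classification of Omega2 N
  set E : Subgroup G := Sgrp ⊓ N with hE
  have hEN : E ≤ N := inf_le_right
  have hE_eq : Omega2 ↥N = E.subgroupOf N := by
    apply le_antisymm
    · apply (Subgroup.closure_le _).mpr
      intro n hn
      have hn4 : ((n : G)) ^ 4 = 1 := by
        have : ((n ^ 4 : ↥N) : G) = ((1 : ↥N) : G) := congrArg _ hn
        push_cast at this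
        exact this
      simp only [SetLike.mem_coe]
      rw [Subgroup.mem_subgroupOf]
      exact ⟨hn4, n.2⟩
    · intro n hn
      rw [Subgroup.mem_subgroupOf] at hn
      apply Subgroup.subset_closure
      show (n : ↥N) ^ 4 = 1
      apply Subtype.ext
      push_cast
      exact hn.1
  letI hEcomm : CommGroup ↥E :=
    { (inferInstance : Group ↥E) with
      mul_comm := fun a b => Subtype.ext
        (Subgroup.mem_center_iff.mp (hScentral (b : G) b.2.1) (a : G)) }
  have h4E : ∀ e : ↥E, e ^ 4 = 1 := by
    intro e
    apply Subtype.ext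
    push_cast
    exact e.2.1
  have hsqE : ∀ e : ↥E, e ^ 2 = 1 → ∃ f : ↥E, f ^ 2 = e := by
    intro e he
    have he2 : ((e : G)) ^ 2 = 1 := by
      have : ((e ^ 2 : ↥E) : G) = ((1 : ↥E) : G) := congrArg _ he
      push_cast at this
      exact this
    obtain ⟨y, hy⟩ := exists_sq hG hpow (hWN (e : G) (hEN e.2) he2)
    obtain ⟨nn, hnn, b, hb, rfl⟩ := hdecomp y
    have hc : Commute nn b := (Subgroup.mem_center_iff.mp (hBc b hb) nn)
    have hy2 : nn ^ 2 = (e : G) := by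
      rw [← hy, hc.mul_pow 2, hB2 b hb, mul_one]
    have hnn4 : nn ^ 4 = 1 := by
      have h1 : (nn * b) ^ 4 = nn ^ 4 * b ^ 4 := hc.mul_pow 4
      have h2 : (nn * b) ^ 4 = ((nn * b) ^ 2) ^ 2 := by rw [← pow_mul]
      have h3 : ((nn * b) ^ 2) ^ 2 = 1 := by
        rw [hc.mul_pow 2, hB2 b hb, mul_one, hy2, he2]
      rw [h2, h3] at h1  -- 1 = nn^4 * b^4
      rw [hB4 b hb, mul_one] at h1
      exact h1.symm
    refine ⟨⟨nn, ⟨hnn4, hnn⟩⟩, ?_⟩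
    apply Subtype.ext
    push_cast
    exact hy2
  obtain ⟨s, ⟨eqE⟩⟩ := classify_aux (Nat.card ↥E) ↥E le_rfl h4E hsqE
  have hOmegaEquiv : ∃ s : ℕ, Nonempty ((Omega2 ↥N) ≃* (Fin s → Multiplicative (ZMod 4))) := by
    refine ⟨s, ⟨?_⟩⟩
    exact ((MulEquiv.subgroupCongr hE_eq).trans (Subgroup.subgroupOfEquivOfLe hEN)).trans eqE
  -- (b) index bound
  haveI : (QP G 1).Normal := QP_normal 1
  have hindex : N.index ≤ 2 ^ d := by
    obtain ⟨S, hScard, hStop⟩ := hgen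
    set π : G →* G ⧸ QP G 1 := QuotientGroup.mk' (QP G 1) with hπ
    have hπs : Function.Surjective π := QuotientGroup.mk'_surjective _
    have h2V : ∀ v : G ⧸ QP G 1, v ^ 2 = 1 := by
      intro v
      obtain ⟨g, rfl⟩ := hπs v
      have : π g ^ 2 = π (g ^ 2) := by rw [map_pow]
      rw [this]
      rw [hπ, QuotientGroup.mk'_apply, QuotientGroup.eq_one_iff]
      simpa using mem_QP g 1
    set T : Finset (G ⧸ QP G 1) := S.image π with hT
    have hTtop : Subgroup.closure (T : Set (G ⧸ QP G 1)) = ⊤ := by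
      rw [hT, Finset.coe_image, ← MonoidHom.map_closure, hStop]
      exact Subgroup.map_top_of_surjective π hπs
    have hcard1 := card_closure_le_of_exp_two h2V T
    rw [hTtop] at hcard1
    have hcard2 : Nat.card (G ⧸ QP G 1) ≤ 2 ^ T.card := by
      rwa [← Subgroup.card_top]
    have hcard3 : (QP G 1).index ≤ 2 ^ d := by
      rw [Subgroup.index_eq_card]
      calc Nat.card (G ⧸ QP G 1) ≤ 2 ^ T.card := hcard2
        _ ≤ 2 ^ S.card := Nat.pow_le_pow_right (by norm_num) (Finset.card_image_le)
        _ ≤ 2 ^ d := Nat.pow_le_pow_right (by norm_num) hScard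
    have hdvd : N.index ∣ (QP G 1).index := Subgroup.index_dvd_of_le hN1
    have hne : N.index ≠ 0 := Subgroup.index_ne_zero_of_finite
    calc N.index ≤ (QP G 1).index := Nat.le_of_dvd (by
        have := Subgroup.index_ne_zero_of_finite (H := QP G 1)
        omega) hdvd
      _ ≤ 2 ^ d := hcard3
  exact ⟨N, hNnormal, hindex, hsub2, hsub4, hOmegaLe, hOmegaEquiv, hinvol⟩
end
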